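/- arXiv:2202.09985 — 4 statements merged into one kernel-verified Lean document; each statement's English description precedes it below -/
import Mathlib

section
/- Let (Q, F) be monopolist-optimal. Then there exists an allocation Q̃ with Q̃ = Q F-almost surely such that (Q̃, F) is also monopolist-optimal, Q̃₊(θ) = Q̃(θ) whenever κ'(Q̃₊(θ)) < θ, and Q̃₋(θ) = Q̃(θ) whenever κ'(Q̃₋(θ)) > θ, where Q̃₊(θ) = inf_{θ' > θ} Q̃(θ') and Q̃₋(θ) = sup_{θ' < θ} Q̃(θ') denote the one-sided limits of the nondecreasing function Q̃. -/
open MeasureTheory Set Filter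

/-- A cumulative distribution function on `[θL, θH]`. -/
structure CDF (θL θH : ℝ) where
  toFun : ℝ → ℝ
  mono : Monotone toFun
  right_continuous : ∀ x, ContinuousWithinAt toFun (Set.Ici x) x
  eq_zero : ∀ x, x < θL → toFun x = 0
  eq_one : ∀ x, θH ≤ x → toFun x = 1

namespace CDF

variable {θL θH : ℝ}

/-- The Stieltjes function associated with a CDF. -/
noncomputable def stieltjes (F : CDF θL θH) : StieltjesFunction ℝ :=
  ⟨F.toFun, F.mono, F.right_continuous⟩

/-- The Lebesgue–Stieltjes measure of a CDF. -/
noncomputable def meas (F : CDF θL θH) : Measure ℝ := F.stieltjes.measure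

/-- The integral `∫ φ dF`. -/
noncomputable def integ (F : CDF θL θH) (φ : ℝ → ℝ) : ℝ := ∫ θ, φ θ ∂F.meas

/-- The support of the distribution with CDF `F`. -/
def supp (F : CDF θL θH) : Set ℝ :=
  {x | ∀ ε > 0, 0 < F.toFun (x + ε) - F.toFun (x - ε)}

/-- The left limit `F₋`. -/
noncomputable def leftLim (F : CDF θL θH) (x : ℝ) : ℝ := Function.leftLim F.toFun x

/-- The mean `∫ θ dF(θ)`. -/
noncomputable def mean (F : CDF θL θH) : ℝ := F.integ (fun θ => θ)

end CDF

/-- `I_F(θ) = ∫_{θL}^{θ} (F₀(t) − F(t)) dt`. -/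
noncomputable def IFun {θL θH : ℝ} (F₀ F : CDF θL θH) (θ : ℝ) : ℝ :=
  ∫ t in θL..θ, (F₀.toFun t - F.toFun t)

/-- `F ∈ 𝓘`: `F` is a feasible signal given the prior `F₀`. -/
def IsSignal {θL θH : ℝ} (F₀ F : CDF θL θH) : Prop :=
  (∀ θ ∈ Set.Icc θL θH, 0 ≤ IFun F₀ F θ) ∧ IFun F₀ F θH = 0

/-- The prior's support contains both endpoints. -/
def IsPrior {θL θH : ℝ} (F₀ : CDF θL θH) : Prop :=
  θL ∈ F₀.supp ∧ θH ∈ F₀.supp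

/-- Assumptions on the information-cost function `c` (with derivatives `c'`, `c''`). -/
structure CostAssumptions (θL θH θ₀ : ℝ) (c c' c'' : ℝ → ℝ) : Prop where
  cont : ContinuousOn c (Set.Icc θL θH)
  nonneg : ∀ θ ∈ Set.Icc θL θH, 0 ≤ c θ
  hasDeriv : ∀ θ ∈ Set.Ioo θL θH, HasDerivAt c (c' θ) θ
  hasDeriv2 : ∀ θ ∈ Set.Ioo θL θH, HasDerivAt c' (c'' θ) θ
  cont2 : ContinuousOn c'' (Set.Ioo θL θH)
  pos2 : ∀ θ ∈ Set.Ioo θL θH, 0 < c'' θ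
  minAt : ∀ θ ∈ Set.Icc θL θH, c θ₀ ≤ c θ
  slopeBot : Filter.Tendsto c' (nhdsWithin θL (Set.Ioi θL)) Filter.atBot
  slopeTop : Filter.Tendsto c' (nhdsWithin θH (Set.Iio θH)) Filter.atTop

/-- Assumptions on the production-cost function `κ` (with derivative `κ'`). -/
structure KappaAssumptions (θL θH qbar : ℝ) (κ κ' : ℝ → ℝ) : Prop where
  hasDeriv : ∀ q ∈ Set.Icc (0:ℝ) qbar, HasDerivWithinAt κ (κ' q) (Set.Icc 0 qbar) q
  contDeriv : ContinuousOn κ' (Set.Icc 0 qbar)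
  strictMono : StrictMonoOn κ (Set.Icc 0 qbar)
  strictConvex : StrictConvexOn ℝ (Set.Icc 0 qbar) κ
  zero : κ 0 = 0
  nonneg : ∀ q ∈ Set.Icc (0:ℝ) qbar, 0 ≤ κ q
  derivZero : κ' 0 ≤ θL
  derivTop : θH < κ' qbar

/-- An allocation: a nondecreasing map from types into `[0, q̄]`. -/
def IsAllocation (θL θH qbar : ℝ) (Q : ℝ → ℝ) : Prop :=
  MonotoneOn Q (Set.Icc θL θH) ∧ ∀ θ ∈ Set.Icc θL θH, Q θ ∈ Set.Icc 0 qbar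

/-- The buyer's value `V_{Q,ū}(θ) = ū + ∫_{θL}^{θ} Q(t) dt`. -/
noncomputable def Vfun (θL : ℝ) (Q : ℝ → ℝ) (u θ : ℝ) : ℝ :=
  u + ∫ t in θL..θ, Q t

/-- The mechanism `(Q, ū)` is `F`-incentive compatible. -/
def IsIC {θL θH : ℝ} (F₀ : CDF θL θH) (c : ℝ → ℝ) (Q : ℝ → ℝ) (u : ℝ)
    (F : CDF θL θH) : Prop :=
  IsSignal F₀ F ∧
  ∀ F' : CDF θL θH, IsSignal F₀ F' →
    F'.integ (fun θ => Vfun θL Q u θ - c θ) ≤ F.integ (fun θ => Vfun θL Q u θ - c θ)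

/-- The monopolist's per-report profit `π_{Q,ū}(θ)`. -/
noncomputable def profit (θL : ℝ) (κ Q : ℝ → ℝ) (u θ : ℝ) : ℝ :=
  θ * Q θ - Vfun θL Q u θ - κ (Q θ)

/-- `(Q, F)` is monopolist-optimal. -/
def MonopolistOptimal {θL θH : ℝ} (qbar : ℝ) (F₀ : CDF θL θH) (c κ : ℝ → ℝ)
    (Q : ℝ → ℝ) (F : CDF θL θH) : Prop :=
  IsAllocation θL θH qbar Q ∧ IsIC F₀ c Q 0 F ∧
  ∀ (Q' : ℝ → ℝ) (u' : ℝ) (F' : CDF θL θH),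
    IsAllocation θL θH qbar Q' → 0 ≤ u' → IsIC F₀ c Q' u' F' →
    F'.integ (profit θL κ Q' u') ≤ F.integ (profit θL κ Q 0)

/-- `P` is an `F`-shadow price. -/
def IsShadowPrice {θL θH : ℝ} (F₀ F : CDF θL θH) (P : ℝ → ℝ) : Prop :=
  (∃ K : NNReal, LipschitzOnWith K P (Set.Icc θL θH)) ∧
  ConvexOn ℝ (Set.Icc θL θH) P ∧
  ∀ a b : ℝ, Set.Ioo a b ⊆ {θ | θ ∈ Set.Icc θL θH ∧ 0 < IFun F₀ F θ} →
    ∃ m k : ℝ, ∀ θ ∈ Set.Ioo a b, P θ = m * θ + k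

/-- `P` is an `F`-shadow price for `φ`. -/
def IsShadowPriceFor {θL θH : ℝ} (F₀ F : CDF θL θH) (φ P : ℝ → ℝ) : Prop :=
  IsShadowPrice F₀ F P ∧ (∀ θ ∈ Set.Icc θL θH, φ θ ≤ P θ) ∧
  ∀ θ ∈ F.supp, P θ = φ θ

/-- `θL_F`, the minimum of the support of `F`. -/
noncomputable def thetaLF {θL θH : ℝ} (F : CDF θL θH) : ℝ := sInf F.supp

/-- `θH_F`, the maximum of the support of `F`. -/
noncomputable def thetaHF {θL θH : ℝ} (F : CDF θL θH) : ℝ := sSup F.supp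

/-- `p` is an `F`-shadow derivative. -/
def IsShadowDeriv {θL θH : ℝ} (qbar : ℝ) (F₀ : CDF θL θH) (c' : ℝ → ℝ)
    (F : CDF θL θH) (p : ℝ → ℝ) : Prop :=
  (∃ M : ℝ, ∀ θ ∈ Set.Icc θL θH, |p θ| ≤ M) ∧
  MonotoneOn p (Set.Icc θL θH) ∧
  (∀ a b : ℝ, Set.Ioo a b ⊆ {θ | θ ∈ Set.Icc θL θH ∧ 0 < IFun F₀ F θ} →
    ∀ x ∈ Set.Ioo a b, ∀ y ∈ Set.Ioo a b, p x = p y) ∧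
  -c' (thetaLF F) ≤ p (thetaLF F) ∧
  p (thetaHF F) ≤ qbar - c' (thetaHF F)

/-- The allocation `Q^p` induced by a shadow derivative `p`. -/
noncomputable def inducedAlloc {θL θH : ℝ} (qbar : ℝ) (c' : ℝ → ℝ)
    (F : CDF θL θH) (p : ℝ → ℝ) (θ : ℝ) : ℝ :=
  if θ < thetaLF F then max (p (thetaLF F) + c' θ) 0
  else if θ ≤ thetaHF F then p θ + c' θ
  else min (p (thetaHF F) + c' θ) qbar

/-- `Q` is `F`-information-cost-canceling. -/
def IsICC {θL θH : ℝ} (qbar : ℝ) (F₀ : CDF θL θH) (c' : ℝ → ℝ)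
    (F : CDF θL θH) (Q : ℝ → ℝ) : Prop :=
  ∃ p : ℝ → ℝ, IsShadowDeriv qbar F₀ c' F p ∧
    ∀ θ ∈ Set.Icc θL θH, Q θ = inducedAlloc qbar c' F p θ

/-- `φ` satisfies edge irrelevance: some maximizer over CDFs with the prior mean has
support in the open interval. -/
def EdgeIrrelevant {θL θH : ℝ} (F₀ : CDF θL θH) (φ : ℝ → ℝ) : Prop :=
  ∃ F' : CDF θL θH, F'.mean = F₀.mean ∧
    (∀ G : CDF θL θH, G.mean = F₀.mean → G.integ φ ≤ F'.integ φ) ∧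
    F'.supp ⊆ Set.Ioo θL θH

/-- `θH_Q = inf {θ : Q(θ) = Q(θH)}`. -/
noncomputable def thetaHQ (θL θH : ℝ) (Q : ℝ → ℝ) : ℝ :=
  sInf {θ | θ ∈ Set.Icc θL θH ∧ Q θ = Q θH}

/-- `θL_Q = sup {θ : Q(θ) = Q(θL)}`. -/
noncomputable def thetaLQ (θL θH : ℝ) (Q : ℝ → ℝ) : ℝ :=
  sSup {θ | θ ∈ Set.Icc θL θH ∧ Q θ = Q θL}

/-- The support of a (cumulative distribution) function `G : ℝ → ℝ`. -/
def suppOfFun (G : ℝ → ℝ) : Set ℝ := {x | ∀ ε > 0, 0 < G (x + ε) - G (x - ε)}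

/-- The conditional CDF `F(·|θ ∈ [a, b])`. -/
noncomputable def condFun {θL θH : ℝ} (F : CDF θL θH) (a b θ : ℝ) : ℝ :=
  if θ < a then 0
  else (F.toFun (min θ b) - F.leftLim a) / (F.toFun b - F.leftLim a)


section AuxStatement16

/-- Gradient inequalities for a convex differentiable function. -/
lemma auxGrad16 {qbar : ℝ} {κ κ' : ℝ → ℝ}
    (hconv : ConvexOn ℝ (Set.Icc 0 qbar) κ)
    (hd : ∀ q ∈ Set.Icc (0:ℝ) qbar, HasDerivWithinAt κ (κ' q) (Set.Icc 0 qbar) q)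
    {a b : ℝ} (ha : a ∈ Set.Icc (0:ℝ) qbar) (hb : b ∈ Set.Icc (0:ℝ) qbar) (hab : a ≤ b) :
    κ' a * (b - a) ≤ κ b - κ a ∧ κ b - κ a ≤ κ' b * (b - a) := by
  rcases eq_or_lt_of_le hab with rfl | h
  · simp
  have hpos : (0:ℝ) < b - a := by linarith
  constructor
  · have h1 := hconv.le_slope_of_hasDerivWithinAt ha hb h (hd a ha)
    rw [slope_def_field] at h1
    calc κ' a * (b - a) ≤ (κ b - κ a) / (b - a) * (b - a) :=
          mul_le_mul_of_nonneg_right h1 hpos.le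
      _ = κ b - κ a := div_mul_cancel₀ _ hpos.ne'
  · have h1 := hconv.slope_le_of_hasDerivWithinAt ha hb h (hd b hb)
    rw [slope_def_field] at h1
    calc κ b - κ a = (κ b - κ a) / (b - a) * (b - a) := (div_mul_cancel₀ _ hpos.ne').symm
      _ ≤ κ' b * (b - a) := mul_le_mul_of_nonneg_right h1 hpos.le

/-- A set of reals indexed by disjoint ordered nonempty open intervals is countable. -/
lemma auxCountable16 {s : Set ℝ} {f g : ℝ → ℝ}
    (hcross : ∀ θ ∈ s, ∀ θ' ∈ s, θ < θ' → g θ ≤ f θ')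
    (hlt : ∀ θ ∈ s, f θ < g θ) : s.Countable := by
  have hex : ∀ θ : ℝ, ∃ q : ℚ, θ ∈ s → f θ < (q:ℝ) ∧ (q:ℝ) < g θ := by
    intro θ
    by_cases hθ : θ ∈ s
    · obtain ⟨q, h1, h2⟩ := exists_rat_btwn (hlt θ hθ)
      exact ⟨q, fun _ => ⟨h1, h2⟩⟩
    · exact ⟨0, fun h => absurd h hθ⟩
  choose r hr using hex
  have hmaps : Set.MapsTo r s (Set.univ : Set ℚ) := fun _ _ => Set.mem_univ _
  refine hmaps.countable_of_injOn ?_ Set.countable_univ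
  intro x hx y hy hxy
  by_contra hne
  rcases lt_or_gt_of_ne hne with h | h
  · have hc : (r x : ℝ) < r y := by
      calc (r x : ℝ) < g x := (hr x hx).2
        _ ≤ f y := hcross x hx y hy h
        _ < r y := (hr y hy).1
    rw [hxy] at hc; exact lt_irrefl _ hc
  · have hc : (r y : ℝ) < r x := by
      calc (r y : ℝ) < g y := (hr y hy).2
        _ ≤ f x := hcross y hy x hx h
        _ < r x := (hr x hx).1
    rw [hxy] at hc; exact lt_irrefl _ hc

end AuxStatement16

theorem statement16 {θL θH : ℝ} (hθL : 0 ≤ θL) (hθ : θL < θH)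
    (F₀ : CDF θL θH) (hF₀ : IsPrior F₀)
    (c c' c'' : ℝ → ℝ) (hc : CostAssumptions θL θH F₀.mean c c' c'')
    (qbar : ℝ) (hqbar : 0 < qbar)
    (κ κ' : ℝ → ℝ) (hκ : KappaAssumptions θL θH qbar κ κ')
    (Q : ℝ → ℝ) (F : CDF θL θH)
    (hopt : MonopolistOptimal qbar F₀ c κ Q F) :
    ∃ Qt : ℝ → ℝ, IsAllocation θL θH qbar Qt ∧
      (∀ᵐ θ ∂F.meas, Qt θ = Q θ) ∧
      MonopolistOptimal qbar F₀ c κ Qt F ∧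
      (∀ θ ∈ Set.Ico θL θH,
        κ' (sInf (Qt '' Set.Ioc θ θH)) < θ → sInf (Qt '' Set.Ioc θ θH) = Qt θ) ∧
      (∀ θ ∈ Set.Ioc θL θH,
        θ < κ' (sSup (Qt '' Set.Ico θL θ)) → sSup (Qt '' Set.Ico θL θ) = Qt θ) := by
  classical
  obtain ⟨⟨hQmono, hQmem⟩, hQIC, hQopt⟩ := hopt
  set qp : ℝ → ℝ := fun θ => sInf (Q '' Set.Ioc θ θH) with hqp_def
  set qm : ℝ → ℝ := fun θ => sSup (Q '' Set.Ico θL θ) with hqm_def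
  set Qt : ℝ → ℝ := fun θ =>
    if θL ≤ θ ∧ θ < θH ∧ κ' (qp θ) < θ then qp θ
    else if θL < θ ∧ θ ≤ θH ∧ θ < κ' (qm θ) then qm θ
    else Q θ with hQt_def
  -- basic facts about qp
  have hqp_nonempty : ∀ θ, θ < θH → (Q '' Set.Ioc θ θH).Nonempty :=
    fun θ h => ⟨Q θH, ⟨θH, ⟨h, le_rfl⟩, rfl⟩⟩
  have hqp_lb : ∀ θ, θL ≤ θ → ∀ y ∈ Q '' Set.Ioc θ θH, (0:ℝ) ≤ y := by
    rintro θ h y ⟨t, ht, rfl⟩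
    exact (hQmem t ⟨h.trans ht.1.le, ht.2⟩).1
  have hqp_bdd : ∀ θ, θL ≤ θ → BddBelow (Q '' Set.Ioc θ θH) :=
    fun θ h => ⟨0, fun y hy => hqp_lb θ h y hy⟩
  have hqp_pos : ∀ θ, θL ≤ θ → θ < θH → 0 ≤ qp θ :=
    fun θ h1 h2 => le_csInf (hqp_nonempty θ h2) (fun y hy => hqp_lb θ h1 y hy)
  have hqp_le_Q : ∀ θ, θL ≤ θ → ∀ t, t ∈ Set.Ioc θ θH → qp θ ≤ Q t :=
    fun θ h1 t ht => csInf_le (hqp_bdd θ h1) ⟨t, ht, rfl⟩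
  have hQ_le_qp : ∀ θ, θL ≤ θ → θ < θH → Q θ ≤ qp θ := by
    intro θ h1 h2
    refine le_csInf (hqp_nonempty θ h2) ?_
    rintro y ⟨t, ht, rfl⟩
    exact hQmono ⟨h1, h2.le⟩ ⟨h1.trans ht.1.le, ht.2⟩ ht.1.le
  have hqp_le_qbar : ∀ θ, θL ≤ θ → θ < θH → qp θ ≤ qbar :=
    fun θ h1 h2 => (hqp_le_Q θ h1 θH ⟨h2, le_rfl⟩).trans (hQmem θH ⟨hθ.le, le_rfl⟩).2
  -- basic facts about qm
  have hqm_nonempty : ∀ θ, θL < θ → (Q '' Set.Ico θL θ).Nonempty :=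
    fun θ h => ⟨Q θL, ⟨θL, ⟨le_rfl, h⟩, rfl⟩⟩
  have hqm_bdd : ∀ θ, θ ≤ θH → BddAbove (Q '' Set.Ico θL θ) := by
    intro θ h
    refine ⟨qbar, ?_⟩
    rintro y ⟨t, ht, rfl⟩
    exact (hQmem t ⟨ht.1, ht.2.le.trans h⟩).2
  have hqm_le_Q : ∀ θ, θL < θ → θ ≤ θH → qm θ ≤ Q θ := by
    intro θ h1 h2
    refine csSup_le (hqm_nonempty θ h1) ?_
    rintro y ⟨t, ht, rfl⟩
    exact hQmono ⟨ht.1, ht.2.le.trans h2⟩ ⟨h1.le, h2⟩ ht.2.le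
  have hQ_le_qm : ∀ θ, θ ≤ θH → ∀ t, t ∈ Set.Ico θL θ → Q t ≤ qm θ :=
    fun θ h2 t ht => le_csSup (hqm_bdd θ h2) ⟨t, ht, rfl⟩
  have hqm_nonneg : ∀ θ, θL < θ → θ ≤ θH → 0 ≤ qm θ :=
    fun θ h1 h2 => (hQmem θL ⟨le_rfl, hθ.le⟩).1.trans (hQ_le_qm θ h2 θL ⟨le_rfl, h1⟩)
  have hqm_le_qbar : ∀ θ, θL < θ → θ ≤ θH → qm θ ≤ qbar := by
    intro θ h1 h2
    refine csSup_le (hqm_nonempty θ h1) ?_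
    rintro y ⟨t, ht, rfl⟩
    exact (hQmem t ⟨ht.1, ht.2.le.trans h2⟩).2
  have hqp_le_qm : ∀ θ θ', θL ≤ θ → θ < θ' → θ' ≤ θH → qp θ ≤ qm θ' := by
    intro θ θ' h1 h2 h3
    have ht1 : θ < (θ + θ') / 2 := by linarith
    have ht2 : (θ + θ') / 2 < θ' := by linarith
    exact (hqp_le_Q θ h1 _ ⟨ht1, ht2.le.trans h3⟩).trans
      (hQ_le_qm θ' h3 _ ⟨h1.trans ht1.le, ht2⟩)
  -- structural facts about Qt
  have hQt_off : ∀ θ, θ ∉ Set.Icc θL θH → Qt θ = Q θ := by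
    intro θ hmem
    have hA : ¬ (θL ≤ θ ∧ θ < θH ∧ κ' (qp θ) < θ) := fun h => hmem ⟨h.1, h.2.1.le⟩
    have hB : ¬ (θL < θ ∧ θ ≤ θH ∧ θ < κ' (qm θ)) := fun h => hmem ⟨h.1.le, h.2.1⟩
    simp only [hQt_def]
    rw [if_neg hA, if_neg hB]
  have hQt_le_qp : ∀ θ, θL ≤ θ → θ < θH → Qt θ ≤ qp θ := by
    intro θ h1 h2
    simp only [hQt_def]
    by_cases hA : θL ≤ θ ∧ θ < θH ∧ κ' (qp θ) < θ
    · rw [if_pos hA]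
    · rw [if_neg hA]
      by_cases hB : θL < θ ∧ θ ≤ θH ∧ θ < κ' (qm θ)
      · rw [if_pos hB]
        exact (hqm_le_Q θ hB.1 hB.2.1).trans (hQ_le_qp θ h1 h2)
      · rw [if_neg hB]
        exact hQ_le_qp θ h1 h2
  have hqm_le_Qt : ∀ θ, θL < θ → θ ≤ θH → qm θ ≤ Qt θ := by
    intro θ h1 h2
    simp only [hQt_def]
    by_cases hA : θL ≤ θ ∧ θ < θH ∧ κ' (qp θ) < θ
    · rw [if_pos hA]
      exact (hqm_le_Q θ h1 h2).trans (hQ_le_qp θ hA.1 hA.2.1)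
    · rw [if_neg hA]
      by_cases hB : θL < θ ∧ θ ≤ θH ∧ θ < κ' (qm θ)
      · rw [if_pos hB]
      · rw [if_neg hB]
        exact hqm_le_Q θ h1 h2
  have hQt_mem : ∀ θ ∈ Set.Icc θL θH, Qt θ ∈ Set.Icc 0 qbar := by
    intro θ hmem
    simp only [hQt_def]
    by_cases hA : θL ≤ θ ∧ θ < θH ∧ κ' (qp θ) < θ
    · rw [if_pos hA]
      exact ⟨hqp_pos θ hA.1 hA.2.1, hqp_le_qbar θ hA.1 hA.2.1⟩
    · rw [if_neg hA]
      by_cases hB : θL < θ ∧ θ ≤ θH ∧ θ < κ' (qm θ)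
      · rw [if_pos hB]
        exact ⟨hqm_nonneg θ hB.1 hB.2.1, hqm_le_qbar θ hB.1 hB.2.1⟩
      · rw [if_neg hB]
        exact hQmem θ hmem
  have hQt_mono : MonotoneOn Qt (Set.Icc θL θH) := by
    intro a ha b hb hab
    rcases eq_or_lt_of_le hab with rfl | h
    · exact le_rfl
    calc Qt a ≤ qp a := hQt_le_qp a ha.1 (lt_of_lt_of_le h hb.2)
      _ ≤ qm b := hqp_le_qm a b ha.1 h hb.2
      _ ≤ Qt b := hqm_le_Qt b (lt_of_le_of_lt ha.1 h) hb.2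
  have hAlloc : IsAllocation θL θH qbar Qt := ⟨hQt_mono, hQt_mem⟩
  -- countability of the difference set
  have hDc : ({θ | Qt θ ≠ Q θ}).Countable := by
    have hS1 : ({θ | (θL ≤ θ ∧ θ < θH) ∧ Q θ < qp θ}).Countable := by
      refine auxCountable16 (f := Q) (g := qp) ?_ ?_
      · intro x hx y hy hxy
        exact hqp_le_Q x hx.1.1 y ⟨hxy, hy.1.2.le⟩
      · exact fun x hx => hx.2
    have hS2 : ({θ | (θL < θ ∧ θ ≤ θH) ∧ qm θ < Q θ}).Countable := by
      refine auxCountable16 (f := qm) (g := Q) ?_ ?_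
      · intro x hx y hy hxy
        exact hQ_le_qm y hy.1.2 x ⟨hx.1.1.le, hxy⟩
      · exact fun x hx => hx.2
    refine (hS1.union hS2).mono ?_
    intro θ hne
    simp only [Set.mem_setOf_eq, hQt_def] at hne
    by_cases hA : θL ≤ θ ∧ θ < θH ∧ κ' (qp θ) < θ
    · rw [if_pos hA] at hne
      exact Or.inl ⟨⟨hA.1, hA.2.1⟩, lt_of_le_of_ne (hQ_le_qp θ hA.1 hA.2.1) (Ne.symm hne)⟩
    · rw [if_neg hA] at hne
      by_cases hB : θL < θ ∧ θ ≤ θH ∧ θ < κ' (qm θ)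
      · rw [if_pos hB] at hne
        exact Or.inr ⟨⟨hB.1, hB.2.1⟩, lt_of_le_of_ne (hqm_le_Q θ hB.1 hB.2.1) hne⟩
      · rw [if_neg hB] at hne
        exact absurd rfl hne
  have hDvol : (volume : Measure ℝ) {θ | Qt θ ≠ Q θ} = 0 := hDc.measure_zero _
  have hae_vol : ∀ᵐ x : ℝ, Qt x = Q x := by
    rw [MeasureTheory.ae_iff]
    exact hDvol
  -- V functions agree
  have hV : ∀ u θ', Vfun θL Qt u θ' = Vfun θL Q u θ' := by
    intro u θ'
    unfold Vfun
    congr 1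
    apply intervalIntegral.integral_congr_ae
    filter_upwards [hae_vol] with x hx _
    exact hx
  -- incentive compatibility of Qt
  have hVfe : (fun θ => Vfun θL Qt 0 θ - c θ) = (fun θ => Vfun θL Q 0 θ - c θ) :=
    funext fun x => by rw [hV 0 x]
  have hIC_Qt : IsIC F₀ c Qt 0 F := by
    refine ⟨hQIC.1, fun F' hF' => ?_⟩
    unfold CDF.integ
    rw [hVfe]
    exact hQIC.2 F' hF'
  -- key pointwise profit comparison
  have hconv : ConvexOn ℝ (Set.Icc 0 qbar) κ := hκ.strictConvex.convexOn
  have hkey : ∀ θ, (θ * Q θ - κ (Q θ) ≤ θ * Qt θ - κ (Qt θ)) ∧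
      (Qt θ ≠ Q θ → θ * Q θ - κ (Q θ) < θ * Qt θ - κ (Qt θ)) := by
    intro θ
    by_cases hmem : θ ∈ Set.Icc θL θH
    swap
    · rw [hQt_off θ hmem]
      exact ⟨le_rfl, fun h => absurd rfl h⟩
    by_cases hA : θL ≤ θ ∧ θ < θH ∧ κ' (qp θ) < θ
    · have hQtθ : Qt θ = qp θ := by simp only [hQt_def]; rw [if_pos hA]
      have ha : Q θ ∈ Set.Icc (0:ℝ) qbar := hQmem θ hmem
      have hb : qp θ ∈ Set.Icc (0:ℝ) qbar :=
        ⟨hqp_pos θ hA.1 hA.2.1, hqp_le_qbar θ hA.1 hA.2.1⟩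
      have hab : Q θ ≤ qp θ := hQ_le_qp θ hA.1 hA.2.1
      have hg := (auxGrad16 hconv hκ.hasDeriv ha hb hab).2
      have hlt : κ' (qp θ) < θ := hA.2.2
      rw [hQtθ]
      constructor
      · nlinarith [mul_nonneg (sub_nonneg.mpr hlt.le) (sub_nonneg.mpr hab)]
      · intro hne
        have hsl : Q θ < qp θ := lt_of_le_of_ne hab (Ne.symm hne)
        nlinarith [mul_pos (sub_pos.mpr hlt) (sub_pos.mpr hsl)]
    · by_cases hB : θL < θ ∧ θ ≤ θH ∧ θ < κ' (qm θ)
      · have hQtθ : Qt θ = qm θ := by simp only [hQt_def]; rw [if_neg hA, if_pos hB]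
        have ha : qm θ ∈ Set.Icc (0:ℝ) qbar :=
          ⟨hqm_nonneg θ hB.1 hB.2.1, hqm_le_qbar θ hB.1 hB.2.1⟩
        have hb : Q θ ∈ Set.Icc (0:ℝ) qbar := hQmem θ hmem
        have hab : qm θ ≤ Q θ := hqm_le_Q θ hB.1 hB.2.1
        have hg := (auxGrad16 hconv hκ.hasDeriv ha hb hab).1
        have hlt : θ < κ' (qm θ) := hB.2.2
        rw [hQtθ]
        constructor
        · nlinarith [mul_nonneg (sub_nonneg.mpr hlt.le) (sub_nonneg.mpr hab)]
        · intro hne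
          have hsl : qm θ < Q θ := lt_of_le_of_ne hab hne
          nlinarith [mul_pos (sub_pos.mpr hlt) (sub_pos.mpr hsl)]
      · have hQtθ : Qt θ = Q θ := by simp only [hQt_def]; rw [if_neg hA, if_neg hB]
        rw [hQtθ]
        exact ⟨le_rfl, fun h => absurd rfl h⟩
  -- the measure F.meas is a finite measure concentrated on [θL, θH]
  have hbot : Filter.Tendsto F.stieltjes atBot (nhds 0) := by
    refine Filter.Tendsto.congr' ?_ tendsto_const_nhds
    filter_upwards [Filter.eventually_lt_atBot θL] with x hx
    exact (F.eq_zero x hx).symm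
  have htop : Filter.Tendsto F.stieltjes atTop (nhds 1) := by
    refine Filter.Tendsto.congr' ?_ tendsto_const_nhds
    filter_upwards [Filter.eventually_ge_atTop θH] with x hx
    exact (F.eq_one x hx).symm
  haveI hfin : IsFiniteMeasure F.meas := F.stieltjes.isFiniteMeasure hbot htop
  have hIio : F.meas (Set.Iio θL) = 0 := by
    have hsub : Set.Iio θL ⊆ ⋃ n : ℕ, Set.Iic (θL - 1/((n:ℝ)+1)) := by
      intro x hx
      obtain ⟨n, hn⟩ := exists_nat_one_div_lt (K := ℝ) (sub_pos.mpr hx)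
      exact Set.mem_iUnion.mpr ⟨n, by simp only [Set.mem_Iic]; linarith⟩
    refine measure_mono_null hsub (measure_iUnion_null fun n => ?_)
    have hlt : θL - 1/(n+1 : ℝ) < θL := by
      have : (0:ℝ) < 1/(n+1:ℝ) := by positivity
      linarith
    show F.stieltjes.measure _ = 0
    rw [F.stieltjes.measure_Iic hbot]
    have : F.stieltjes (θL - 1/(n+1:ℝ)) = 0 := F.eq_zero _ hlt
    rw [this]
    simp
  have hIoi : F.meas (Set.Ioi θH) = 0 := by
    have hsub : Set.Ioi θH ⊆ ⋃ n : ℕ, Set.Ioc θH (θH + (n+1)) := by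
      intro x hx
      obtain ⟨n, hn⟩ := exists_nat_ge (x - θH)
      exact Set.mem_iUnion.mpr ⟨n, hx, by push_cast; linarith⟩
    refine measure_mono_null hsub (measure_iUnion_null fun n => ?_)
    show F.stieltjes.measure _ = 0
    rw [F.stieltjes.measure_Ioc]
    have hco : (⇑F.stieltjes : ℝ → ℝ) = F.toFun := rfl
    rw [hco, F.eq_one (θH + ((n:ℝ)+1)) (by nlinarith [Nat.cast_nonneg (α := ℝ) n]), F.eq_one θH le_rfl]
    simp
  have hcompl : F.meas (Set.Icc θL θH)ᶜ = 0 := by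
    refine measure_mono_null ?_ (measure_union_null hIio hIoi)
    intro x hx
    simp only [Set.mem_compl_iff, Set.mem_Icc, not_and, not_le] at hx
    rcases le_or_gt θL x with h | h
    · exact Or.inr (hx h)
    · exact Or.inl h
  have hIccae : ∀ᵐ θ ∂F.meas, θ ∈ Set.Icc θL θH := by
    rw [MeasureTheory.ae_iff]
    convert hcompl using 2
    rfl
  -- measurable bounded representatives
  set proj : ℝ → ℝ := fun θ => max θL (min θ θH) with hproj_def
  have hproj_mono : Monotone proj := fun a b hab => max_le_max le_rfl (min_le_min hab le_rfl)
  have hproj_mem : ∀ θ, proj θ ∈ Set.Icc θL θH :=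
    fun θ => ⟨le_max_left _ _, max_le hθ.le (min_le_right _ _)⟩
  have hproj_id : ∀ θ ∈ Set.Icc θL θH, proj θ = θ := by
    intro θ hmem
    simp only [hproj_def]
    rw [min_eq_left hmem.2, max_eq_right hmem.1]
  set Qc : ℝ → ℝ := fun θ => Q (proj θ) with hQc_def
  have hQc_mono : Monotone Qc :=
    fun a b hab => hQmono (hproj_mem a) (hproj_mem b) (hproj_mono hab)
  set Qtc : ℝ → ℝ := fun θ => Qt (proj θ) with hQtc_def
  have hQtc_mono : Monotone Qtc :=
    fun a b hab => hQt_mono (hproj_mem a) (hproj_mem b) (hproj_mono hab)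
  set clamp : ℝ → ℝ := fun q => max 0 (min q qbar) with hclamp_def
  have hclamp_cont : Continuous clamp := continuous_const.max (continuous_id.min continuous_const)
  have hclamp_mem : ∀ q, clamp q ∈ Set.Icc (0:ℝ) qbar :=
    fun q => ⟨le_max_left _ _, max_le hqbar.le (min_le_right _ _)⟩
  have hclamp_id : ∀ q ∈ Set.Icc (0:ℝ) qbar, clamp q = q := by
    intro q hq
    simp only [hclamp_def]
    rw [min_eq_left hq.2, max_eq_right hq.1]
  have hκ_contOn : ContinuousOn κ (Set.Icc 0 qbar) :=
    fun q hq => (hκ.hasDeriv q hq).continuousWithinAt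
  set κc : ℝ → ℝ := fun q => κ (clamp q) with hκc_def
  have hκc_cont : Continuous κc := hκ_contOn.comp_continuous hclamp_cont hclamp_mem
  obtain ⟨Cκ, hCκ⟩ := isCompact_Icc.exists_bound_of_continuousOn hκ_contOn
  have hCκ0 : 0 ≤ Cκ := (norm_nonneg _).trans (hCκ 0 ⟨le_rfl, hqbar.le⟩)
  set Vc : ℝ → ℝ := fun θ => ∫ t in θL..θ, Qc t with hVc_def
  have hQc_intble : ∀ a b : ℝ, IntervalIntegrable Qc volume a b :=
    fun a b => hQc_mono.intervalIntegrable
  have hVc_mono : Monotone Vc := by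
    intro a b hab
    have hsplit := intervalIntegral.integral_add_adjacent_intervals
      (hQc_intble θL a) (hQc_intble a b)
    have hpos : 0 ≤ ∫ t in a..b, Qc t :=
      intervalIntegral.integral_nonneg hab fun u _ => (hQmem _ (hproj_mem u)).1
    simp only [hVc_def]
    linarith [hsplit, hpos]
  have hVc_eq : ∀ θ ∈ Set.Icc θL θH, Vfun θL Q 0 θ = Vc θ := by
    intro θ hmem
    unfold Vfun
    rw [zero_add]
    simp only [hVc_def]
    apply intervalIntegral.integral_congr
    intro t ht
    rw [Set.uIcc_of_le hmem.1] at ht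
    simp only [hQc_def]
    rw [hproj_id t ⟨ht.1, ht.2.trans hmem.2⟩]
  -- indicator versions of the profit functions
  set pQ : ℝ → ℝ := (Set.Icc θL θH).indicator (fun θ => θ * Qc θ - Vc θ - κc (Qc θ)) with hpQ_def
  set pQt : ℝ → ℝ := (Set.Icc θL θH).indicator (fun θ => θ * Qtc θ - Vc θ - κc (Qtc θ)) with hpQt_def
  have hmeasur : ∀ g : ℝ → ℝ, Monotone g →
      Measurable ((Set.Icc θL θH).indicator (fun θ => θ * g θ - Vc θ - κc (g θ))) := by
    intro g hg
    refine Measurable.indicator ?_ measurableSet_Icc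
    exact ((measurable_id.mul hg.measurable).sub hVc_mono.measurable).sub
      (hκc_cont.measurable.comp hg.measurable)
  set Cb : ℝ := (|θL| + |θH|) * qbar + (|Vc θL| + |Vc θH|) + Cκ with hCb_def
  have hbound : ∀ g : ℝ → ℝ, (∀ θ ∈ Set.Icc θL θH, g θ ∈ Set.Icc 0 qbar) →
      ∀ θ, |(Set.Icc θL θH).indicator (fun θ => θ * g θ - Vc θ - κc (g θ)) θ| ≤ Cb := by
    intro g hgmem θ
    by_cases hmem : θ ∈ Set.Icc θL θH
    · rw [Set.indicator_of_mem hmem]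
      have habs : |θ| ≤ |θL| + |θH| := by
        rw [abs_le]
        constructor
        · linarith [neg_abs_le θL, hmem.1, abs_nonneg θH]
        · linarith [le_abs_self θH, hmem.2, abs_nonneg θL]
      have hA : |θ * g θ| ≤ (|θL| + |θH|) * qbar := by
        rw [abs_mul]
        refine mul_le_mul habs ?_ (abs_nonneg _) (by positivity)
        rw [abs_of_nonneg (hgmem θ hmem).1]
        exact (hgmem θ hmem).2
      have hVb : |Vc θ| ≤ |Vc θL| + |Vc θH| := by
        rw [abs_le]
        constructor
        · linarith [neg_abs_le (Vc θL), hVc_mono hmem.1, abs_nonneg (Vc θH)]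
        · linarith [le_abs_self (Vc θH), hVc_mono hmem.2, abs_nonneg (Vc θL)]
      have hk : |κc (g θ)| ≤ Cκ := by
        have := hCκ (clamp (g θ)) (hclamp_mem _)
        rw [Real.norm_eq_abs] at this
        simpa only [hκc_def] using this
      rw [abs_le] at hA hVb hk ⊢
      constructor <;> simp only [hCb_def] <;> linarith [hA.1, hA.2, hVb.1, hVb.2, hk.1, hk.2]
    · rw [Set.indicator_of_notMem hmem]
      simp only [abs_zero, hCb_def]
      positivity
  have hintg : ∀ g : ℝ → ℝ, Monotone g → (∀ θ ∈ Set.Icc θL θH, g θ ∈ Set.Icc 0 qbar) →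
      MeasureTheory.Integrable
        ((Set.Icc θL θH).indicator (fun θ => θ * g θ - Vc θ - κc (g θ))) F.meas := by
    intro g h1 h2
    refine MeasureTheory.Integrable.mono' (MeasureTheory.integrable_const Cb)
      (hmeasur g h1).aestronglyMeasurable ?_
    refine Filter.Eventually.of_forall fun θ => ?_
    rw [Real.norm_eq_abs]
    exact hbound g h2 θ
  have hIntQ : MeasureTheory.Integrable pQ F.meas := by
    rw [hpQ_def]
    exact hintg Qc hQc_mono fun θ hmem => by
      simp only [hQc_def]; rw [hproj_id θ hmem]; exact hQmem θ hmem
  have hIntQt : MeasureTheory.Integrable pQt F.meas := by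
    rw [hpQt_def]
    exact hintg Qtc hQtc_mono fun θ hmem => by
      simp only [hQtc_def]; rw [hproj_id θ hmem]; exact hQt_mem θ hmem
  -- a.e. identification of profits with the indicator versions
  have hpQ_ae : (profit θL κ Q 0) =ᵐ[F.meas] pQ := by
    filter_upwards [hIccae] with θ hmem
    unfold profit
    simp only [hpQ_def]
    rw [Set.indicator_of_mem hmem]
    simp only [hQc_def, hκc_def]
    rw [hproj_id θ hmem, hclamp_id _ (hQmem θ hmem), hVc_eq θ hmem]
  have hpQt_ae : (profit θL κ Qt 0) =ᵐ[F.meas] pQt := by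
    filter_upwards [hIccae] with θ hmem
    unfold profit
    simp only [hpQt_def]
    rw [Set.indicator_of_mem hmem]
    simp only [hQtc_def, hκc_def]
    rw [hproj_id θ hmem, hclamp_id _ (hQt_mem θ hmem), hV 0 θ, hVc_eq θ hmem]
  have hint1 : F.integ (profit θL κ Qt 0) = ∫ θ, pQt θ ∂F.meas :=
    MeasureTheory.integral_congr_ae hpQt_ae
  have hint2 : F.integ (profit θL κ Q 0) = ∫ θ, pQ θ ∂F.meas :=
    MeasureTheory.integral_congr_ae hpQ_ae
  -- difference of indicator profits
  have hpdiff : ∀ θ ∈ Set.Icc θL θH,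
      pQt θ - pQ θ = (θ * Qt θ - κ (Qt θ)) - (θ * Q θ - κ (Q θ)) := by
    intro θ hmem
    simp only [hpQt_def, hpQ_def]
    rw [Set.indicator_of_mem hmem, Set.indicator_of_mem hmem]
    simp only [hQtc_def, hQc_def, hκc_def]
    rw [hproj_id θ hmem, hclamp_id _ (hQt_mem θ hmem), hclamp_id _ (hQmem θ hmem)]
    ring
  have hgap_nonneg : ∀ θ, 0 ≤ pQt θ - pQ θ := by
    intro θ
    by_cases hmem : θ ∈ Set.Icc θL θH
    · rw [hpdiff θ hmem]
      linarith [(hkey θ).1]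
    · simp only [hpQt_def, hpQ_def]
      rw [Set.indicator_of_notMem hmem, Set.indicator_of_notMem hmem]
      simp
  have hsub_int : ∫ θ, (pQt θ - pQ θ) ∂F.meas
      = F.integ (profit θL κ Qt 0) - F.integ (profit θL κ Q 0) := by
    rw [MeasureTheory.integral_sub hIntQt hIntQ, hint1, hint2]
  have hle0 : ∫ θ, (pQt θ - pQ θ) ∂F.meas ≤ 0 := by
    rw [hsub_int]
    have := hQopt Qt 0 F hAlloc le_rfl hIC_Qt
    linarith
  have hge0 : 0 ≤ ∫ θ, (pQt θ - pQ θ) ∂F.meas :=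
    MeasureTheory.integral_nonneg hgap_nonneg
  have heq0 : (fun θ => pQt θ - pQ θ) =ᵐ[F.meas] 0 :=
    (MeasureTheory.integral_eq_zero_iff_of_nonneg hgap_nonneg (hIntQt.sub hIntQ)).mp
      (le_antisymm hle0 hge0)
  -- a.e. equality of Qt and Q
  have hQae : ∀ᵐ θ ∂F.meas, Qt θ = Q θ := by
    filter_upwards [heq0, hIccae] with θ h0 hmem
    by_contra hne
    have hstrict := (hkey θ).2 hne
    have h0' : pQt θ - pQ θ = 0 := h0
    rw [hpdiff θ hmem] at h0'
    linarith
  -- profits agree in F-integral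
  have hprofit_eq : F.integ (profit θL κ Qt 0) = F.integ (profit θL κ Q 0) := by
    apply MeasureTheory.integral_congr_ae
    filter_upwards [hQae] with θ hθ'
    unfold profit
    rw [hθ', hV 0 θ]
  have hMonOpt : MonopolistOptimal qbar F₀ c κ Qt F := by
    refine ⟨hAlloc, hIC_Qt, fun Q' u' F' ha' hu' hic' => ?_⟩
    exact (hQopt Q' u' F' ha' hu' hic').trans hprofit_eq.symm.le
  -- one-sided limits of Qt agree with those of Q
  have hQt_im_bddB : ∀ θ, θL ≤ θ → BddBelow (Qt '' Set.Ioc θ θH) := by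
    intro θ h
    refine ⟨0, ?_⟩
    rintro y ⟨t, ht, rfl⟩
    exact (hQt_mem t ⟨h.trans ht.1.le, ht.2⟩).1
  have hQt_im_ne : ∀ θ, θ < θH → (Qt '' Set.Ioc θ θH).Nonempty :=
    fun θ h => ⟨Qt θH, θH, ⟨h, le_rfl⟩, rfl⟩
  have hlim1 : ∀ θ, θL ≤ θ → θ < θH → sInf (Qt '' Set.Ioc θ θH) = qp θ := by
    intro θ h1 h2
    apply le_antisymm
    · refine le_csInf (hqp_nonempty θ h2) ?_
      rintro y ⟨t, ht, rfl⟩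
      have hs1 : θ < (θ + t) / 2 := by linarith [ht.1]
      have hs2 : (θ + t) / 2 < t := by linarith [ht.1]
      have hsH : (θ + t) / 2 < θH := hs2.trans_le ht.2
      calc sInf (Qt '' Set.Ioc θ θH) ≤ Qt ((θ + t) / 2) :=
            csInf_le (hQt_im_bddB θ h1) ⟨_, ⟨hs1, hsH.le⟩, rfl⟩
        _ ≤ qp ((θ + t) / 2) := hQt_le_qp _ (h1.trans hs1.le) hsH
        _ ≤ Q t := hqp_le_Q _ (h1.trans hs1.le) t ⟨hs2, ht.2⟩
    · refine le_csInf (hQt_im_ne θ h2) ?_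
      rintro y ⟨s, hs, rfl⟩
      have hsL : θL < s := h1.trans_lt hs.1
      calc qp θ ≤ qm s := hqp_le_qm θ s h1 hs.1 hs.2
        _ ≤ Qt s := hqm_le_Qt s hsL hs.2
  have hQt_im_bddA : ∀ θ, θ ≤ θH → BddAbove (Qt '' Set.Ico θL θ) := by
    intro θ h
    refine ⟨qbar, ?_⟩
    rintro y ⟨t, ht, rfl⟩
    exact (hQt_mem t ⟨ht.1, ht.2.le.trans h⟩).2
  have hlim2 : ∀ θ, θL < θ → θ ≤ θH → sSup (Qt '' Set.Ico θL θ) = qm θ := by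
    intro θ h1 h2
    apply le_antisymm
    · refine csSup_le ⟨Qt θL, θL, ⟨le_rfl, h1⟩, rfl⟩ ?_
      rintro y ⟨s, hs, rfl⟩
      calc Qt s ≤ qp s := hQt_le_qp s hs.1 (hs.2.trans_le h2)
        _ ≤ qm θ := hqp_le_qm s θ hs.1 hs.2 h2
    · refine csSup_le (hqm_nonempty θ h1) ?_
      rintro y ⟨t, ht, rfl⟩
      have hs1 : t < (t + θ) / 2 := by linarith [ht.2]
      have hs2 : (t + θ) / 2 < θ := by linarith [ht.2]
      calc Q t ≤ qm ((t + θ) / 2) := hQ_le_qm _ (hs2.le.trans h2) t ⟨ht.1, hs1⟩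
        _ ≤ Qt ((t + θ) / 2) := hqm_le_Qt _ (ht.1.trans_lt hs1) (hs2.le.trans h2)
        _ ≤ sSup (Qt '' Set.Ico θL θ) :=
            le_csSup (hQt_im_bddA θ h2) ⟨_, ⟨ht.1.trans hs1.le, hs2⟩, rfl⟩
  -- monotonicity of κ'
  have hκ'_mono : ∀ a b : ℝ, a ∈ Set.Icc (0:ℝ) qbar → b ∈ Set.Icc (0:ℝ) qbar → a ≤ b →
      κ' a ≤ κ' b := by
    intro a b ha hb hab
    rcases eq_or_lt_of_le hab with rfl | h
    · exact le_rfl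
    have h1 := (auxGrad16 hconv hκ.hasDeriv ha hb hab).1
    have h2 := (auxGrad16 hconv hκ.hasDeriv ha hb hab).2
    nlinarith [sub_pos.mpr h]
  -- conclusion
  refine ⟨Qt, hAlloc, hQae, hMonOpt, ?_, ?_⟩
  · intro θ hmem hlt
    rw [hlim1 θ hmem.1 hmem.2] at hlt ⊢
    have hA : θL ≤ θ ∧ θ < θH ∧ κ' (qp θ) < θ := ⟨hmem.1, hmem.2, hlt⟩
    simp only [hQt_def]
    rw [if_pos hA]
  · intro θ hmem hlt
    rw [hlim2 θ hmem.1 hmem.2] at hlt ⊢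
    have hnA : ¬ (θL ≤ θ ∧ θ < θH ∧ κ' (qp θ) < θ) := by
      rintro ⟨hA1, hA2, hA3⟩
      have h1 : qm θ ≤ Q θ := hqm_le_Q θ hmem.1 hmem.2
      have h2 : Q θ ≤ qp θ := hQ_le_qp θ hA1 hA2
      have h3 : κ' (qm θ) ≤ κ' (qp θ) :=
        hκ'_mono _ _ ⟨hqm_nonneg θ hmem.1 hmem.2, hqm_le_qbar θ hmem.1 hmem.2⟩
          ⟨hqp_pos θ hA1 hA2, hqp_le_qbar θ hA1 hA2⟩ (h1.trans h2)
      linarith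
    have hB : θL < θ ∧ θ ≤ θH ∧ θ < κ' (qm θ) := ⟨hmem.1, hmem.2, hlt⟩
    simp only [hQt_def]
    rw [if_neg hnA, if_pos hB]
end

section
/- Let F ∈ 𝓘 with supp F ⊂ (θL, θH), let Q be an F-ICC allocation, and fix θ* ∈ [θL_F, θH_F). If either (strong condition) ∫_{(θ*, θH]} κ'(Q(θ)) dF(θ) ≤ (1 − F(θ*))·θ* or (weak condition) ∫_{[θ*, θH]} κ'(Q(θ)) dF(θ) ≤ (1 − F₋(θ*))·θ*, then κ'(Q(θ*)) < θ*. Moreover, the strong condition implies the weak condition. -/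
open MeasureTheory Set Filter

theorem statement17 {θL θH : ℝ} (hθL : 0 ≤ θL) (hθ : θL < θH)
    (F₀ : CDF θL θH) (hF₀ : IsPrior F₀)
    (c c' c'' : ℝ → ℝ) (hc : CostAssumptions θL θH F₀.mean c c' c'')
    (qbar : ℝ) (hqbar : 0 < qbar)
    (κ κ' : ℝ → ℝ) (hκ : KappaAssumptions θL θH qbar κ κ')
    (F : CDF θL θH) (hF : IsSignal F₀ F) (hsupp : F.supp ⊆ Set.Ioo θL θH)
    (Q : ℝ → ℝ) (hICC : IsICC qbar F₀ c' F Q)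
    (θs : ℝ) (hθs : θs ∈ Set.Ico (thetaLF F) (thetaHF F)) :
    ((∫ θ in Set.Ioc θs θH, κ' (Q θ) ∂F.meas) ≤ (1 - F.toFun θs) * θs →
      (∫ θ in Set.Icc θs θH, κ' (Q θ) ∂F.meas) ≤ (1 - F.leftLim θs) * θs) ∧
    (((∫ θ in Set.Ioc θs θH, κ' (Q θ) ∂F.meas) ≤ (1 - F.toFun θs) * θs ∨
      (∫ θ in Set.Icc θs θH, κ' (Q θ) ∂F.meas) ≤ (1 - F.leftLim θs) * θs) →
      κ' (Q θs) < θs) := by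
  classical
  obtain ⟨p, hp, hQ⟩ := hICC
  obtain ⟨hpbd, hpmono, hpconst, hpL, hpH⟩ := hp
  have hsne : F.supp.Nonempty := by
    by_contra h
    rw [Set.not_nonempty_iff_eq_empty] at h
    have h1 : thetaLF F = 0 := by simp [thetaLF, h, Real.sInf_empty]
    have h2 : thetaHF F = 0 := by simp [thetaHF, h, Real.sSup_empty]
    rw [h1, h2] at hθs
    exact absurd hθs.2 (not_lt.2 hθs.1)
  have hbddB : BddBelow F.supp := ⟨θL, fun x hx => (hsupp hx).1.le⟩
  have hbddA : BddAbove F.supp := ⟨θH, fun x hx => (hsupp hx).2.le⟩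
  have hclosed : IsClosed F.supp := by
    rw [← isOpen_compl_iff, Metric.isOpen_iff]
    intro x hx
    simp only [CDF.supp, Set.mem_compl_iff, Set.mem_setOf_eq] at hx
    push_neg at hx
    obtain ⟨ε, hε, hle⟩ := hx
    refine ⟨ε/2, by positivity, fun y hy => ?_⟩
    simp only [Metric.mem_ball, Real.dist_eq, abs_lt] at hy
    simp only [Set.mem_compl_iff, CDF.supp, Set.mem_setOf_eq]
    push_neg
    refine ⟨ε/2, by positivity, ?_⟩
    have h1 : F.toFun (y + ε/2) ≤ F.toFun (x + ε) := F.mono (by linarith [hy.1, hy.2])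
    have h2 : F.toFun (x - ε) ≤ F.toFun (y - ε/2) := F.mono (by linarith [hy.1, hy.2])
    linarith
  have hLFmem : thetaLF F ∈ F.supp := hclosed.csInf_mem hsne hbddB
  have hHFmem : thetaHF F ∈ F.supp := hclosed.csSup_mem hsne hbddA
  have hLFI : thetaLF F ∈ Set.Ioo θL θH := hsupp hLFmem
  have hHFI : thetaHF F ∈ Set.Ioo θL θH := hsupp hHFmem
  have hθsI : θs ∈ Set.Ioo θL θH := ⟨lt_of_lt_of_le hLFI.1 hθs.1, lt_trans hθs.2 hHFI.2⟩
  have hc'mono : StrictMonoOn c' (Set.Ioo θL θH) := by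
    apply strictMonoOn_of_deriv_pos (convex_Ioo _ _)
    · exact fun x hx => (hc.hasDeriv2 x hx).continuousAt.continuousWithinAt
    · intro x hx
      rw [interior_Ioo] at hx
      rw [(hc.hasDeriv2 x hx).deriv]
      exact hc.pos2 x hx
  have hκ'mono : StrictMonoOn κ' (Set.Icc 0 qbar) := by
    intro x hx y hy hxy
    calc κ' x < slope κ x y :=
          hκ.strictConvex.lt_slope_of_hasDerivWithinAt hx hy hxy (hκ.hasDeriv x hx)
      _ < κ' y := hκ.strictConvex.slope_lt_of_hasDerivWithinAt hx hy hxy (hκ.hasDeriv y hy)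
  have hQmid : ∀ θ, thetaLF F ≤ θ → θ ≤ thetaHF F → Q θ = p θ + c' θ := by
    intro θ h1 h2
    rw [hQ θ ⟨le_trans hLFI.1.le h1, le_trans h2 hHFI.2.le⟩, inducedAlloc,
      if_neg (not_lt.2 h1), if_pos h2]
  have hIooSub : ∀ θ, thetaLF F ≤ θ → θ ≤ thetaHF F → θ ∈ Set.Ioo θL θH :=
    fun θ h1 h2 => ⟨lt_of_lt_of_le hLFI.1 h1, lt_of_le_of_lt h2 hHFI.2⟩
  have hQrange : ∀ θ, thetaLF F ≤ θ → θ ≤ thetaHF F → p θ + c' θ ∈ Set.Icc 0 qbar := by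
    intro θ h1 h2
    have hθI := hIooSub θ h1 h2
    have hθIcc : θ ∈ Set.Icc θL θH := ⟨hθI.1.le, hθI.2.le⟩
    have hLIcc : thetaLF F ∈ Set.Icc θL θH := ⟨hLFI.1.le, hLFI.2.le⟩
    have hHIcc : thetaHF F ∈ Set.Icc θL θH := ⟨hHFI.1.le, hHFI.2.le⟩
    constructor
    · have hh1 := hpmono hLIcc hθIcc h1
      have hh2 := hc'mono.monotoneOn hLFI hθI h1
      linarith [hpL]
    · have hh1 := hpmono hθIcc hHIcc h2
      have hh2 := hc'mono.monotoneOn hθI hHFI h2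
      linarith [hpH]
  set θm : ℝ := (θs + thetaHF F)/2 with hθmdef
  have hθm1 : θs < θm := by rw [hθmdef]; linarith [hθs.2]
  have hθm2 : θm < thetaHF F := by rw [hθmdef]; linarith [hθs.2]
  set proj : ℝ → ℝ := fun θ => max θs (min θ (thetaHF F)) with hprojdef
  have hprojmem : ∀ θ, thetaLF F ≤ proj θ ∧ proj θ ≤ thetaHF F := fun θ =>
    ⟨le_trans hθs.1 (le_max_left _ _), max_le hθs.2.le (min_le_right _ _)⟩
  set g : ℝ → ℝ := fun θ => κ' (p (proj θ) + c' (proj θ)) with hgdef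
  have hgmono : Monotone g := by
    intro x y hxy
    have h1 : proj x ≤ proj y := max_le_max le_rfl (min_le_min hxy le_rfl)
    have hx1 := hprojmem x; have hy1 := hprojmem y
    have hxI := hIooSub _ hx1.1 hx1.2
    have hyI := hIooSub _ hy1.1 hy1.2
    have hmono : p (proj x) + c' (proj x) ≤ p (proj y) + c' (proj y) :=
      add_le_add (hpmono ⟨hxI.1.le, hxI.2.le⟩ ⟨hyI.1.le, hyI.2.le⟩ h1)
        (hc'mono.monotoneOn hxI hyI h1)
    exact hκ'mono.monotoneOn (hQrange _ hx1.1 hx1.2) (hQrange _ hy1.1 hy1.2) hmono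
  have hgrange : ∀ θ, κ' 0 ≤ g θ ∧ g θ ≤ κ' qbar := by
    intro θ
    have h1 := hQrange _ (hprojmem θ).1 (hprojmem θ).2
    exact ⟨hκ'mono.monotoneOn ⟨le_rfl, hqbar.le⟩ h1 h1.1,
      hκ'mono.monotoneOn h1 ⟨hqbar.le, le_rfl⟩ h1.2⟩
  have hprojs : proj θs = θs := by
    rw [hprojdef]; simp only; rw [min_eq_left hθs.2.le, max_self]
  have hprojm : proj θm = θm := by
    rw [hprojdef]; simp only; rw [min_eq_left hθm2.le, max_eq_right hθm1.le]
  have hgθs : g θs = κ' (Q θs) := by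
    rw [hgdef]; simp only; rw [hprojs, hQmid θs hθs.1 hθs.2.le]
  have hab : g θs < g θm := by
    rw [hgdef]; simp only; rw [hprojs, hprojm]
    have hθmI := hIooSub θm (le_trans hθs.1 hθm1.le) hθm2.le
    have hmono : p θs + c' θs < p θm + c' θm :=
      add_lt_add_of_le_of_lt
        (hpmono ⟨hθsI.1.le, hθsI.2.le⟩ ⟨hθmI.1.le, hθmI.2.le⟩ hθm1.le)
        (hc'mono hθsI hθmI hθm1)
    exact hκ'mono (hQrange θs hθs.1 hθs.2.le) (hQrange θm (le_trans hθs.1 hθm1.le) hθm2.le) hmono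
  -- null set above the support
  have hnull : F.meas (Set.Ioc (thetaHF F) θH) = 0 := by
    apply measure_null_of_locally_null
    intro x hx
    have hxs : x ∉ F.supp := fun hmem => absurd (le_csSup hbddA hmem) (not_le.2 hx.1)
    simp only [CDF.supp, Set.mem_setOf_eq] at hxs
    push_neg at hxs
    obtain ⟨ε, hε, hle⟩ := hxs
    refine ⟨Set.Ioo (x-ε) (x+ε) ∩ Set.Ioc (thetaHF F) θH,
      Filter.inter_mem (mem_nhdsWithin_of_mem_nhds
        (Ioo_mem_nhds (by linarith) (by linarith))) self_mem_nhdsWithin, ?_⟩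
    have hz : F.meas (Set.Ioc (x-ε) (x+ε)) = 0 := by
      show F.stieltjes.measure _ = 0
      rw [StieltjesFunction.measure_Ioc]
      exact ENNReal.ofReal_eq_zero.2 (by exact hle)
    exact measure_mono_null (Set.inter_subset_left.trans Set.Ioo_subset_Ioc_self) hz
  have hF1 : F.toFun θH = 1 := F.eq_one θH le_rfl
  have hleftle : F.leftLim θs ≤ F.toFun θs := Monotone.leftLim_le F.mono le_rfl
  have hFθs1 : F.toFun θs ≤ 1 := by rw [← hF1]; exact F.mono hθsI.2.le
  -- integrability of g
  have hfin : F.meas (Set.Icc θs θH) ≠ ⊤ := by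
    show F.stieltjes.measure _ ≠ ⊤
    rw [StieltjesFunction.measure_Icc]
    exact ENNReal.ofReal_ne_top
  have hint : MeasureTheory.IntegrableOn g (Set.Icc θs θH) F.meas := by
    apply MeasureTheory.Measure.integrableOn_of_bounded (M := max |κ' 0| |κ' qbar|) hfin
      hgmono.measurable.aestronglyMeasurable
    filter_upwards with x
    rw [Real.norm_eq_abs, abs_le]
    have h1 := (hgrange x).1
    have h2 := (hgrange x).2
    constructor
    · have := neg_abs_le (κ' 0)
      have := le_max_left |κ' 0| |κ' qbar|
      linarith
    · have := le_abs_self (κ' qbar)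
      have := le_max_right |κ' 0| |κ' qbar|
      linarith
  -- congruence of integrals
  have hcongr : ∀ S : Set ℝ, MeasurableSet S → S ⊆ Set.Icc θs θH →
      ∫ θ in S, κ' (Q θ) ∂F.meas = ∫ θ in S, g θ ∂F.meas := by
    intro S hSm hSsub
    apply MeasureTheory.setIntegral_congr_ae hSm
    have hae : ∀ᵐ x ∂F.meas, x ∉ Set.Ioc (thetaHF F) θH :=
      MeasureTheory.compl_mem_ae_iff.2 hnull
    filter_upwards [hae] with x hxc hxS
    have hx1 : θs ≤ x := (hSsub hxS).1
    have hx2 : x ≤ thetaHF F := by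
      by_contra hgt
      exact hxc ⟨not_le.1 hgt, (hSsub hxS).2⟩
    have hproj : proj x = x := by
      rw [hprojdef]; simp only; rw [min_eq_left hx2, max_eq_right hx1]
    rw [hQmid x (le_trans hθs.1 hx1) hx2, hgdef]
    simp only
    rw [hproj]
  -- measure of T := Ioc θm θH
  set T : Set ℝ := Set.Ioc θm θH with hTdef
  have hFm : F.toFun θm < F.toFun θH := by
    set ε := min (thetaHF F - θm) (θH - thetaHF F) with hεdef
    have hεpos : 0 < ε := lt_min (by linarith) (by linarith [hHFI.2])
    have hsup := hHFmem ε hεpos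
    have h1 : F.toFun θm ≤ F.toFun (thetaHF F - ε) :=
      F.mono (by have := min_le_left (thetaHF F - θm) (θH - thetaHF F); rw [← hεdef] at this; linarith)
    have h2 : F.toFun (thetaHF F + ε) ≤ F.toFun θH :=
      F.mono (by have := min_le_right (thetaHF F - θm) (θH - thetaHF F); rw [← hεdef] at this; linarith)
    linarith
  have hμT : F.meas T = ENNReal.ofReal (F.toFun θH - F.toFun θm) := by
    show F.stieltjes.measure _ = _
    rw [hTdef, StieltjesFunction.measure_Ioc]
    rfl
  have hTfin : F.meas T ≠ ⊤ := by rw [hμT]; exact ENNReal.ofReal_ne_top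
  have hmT : 0 < (F.meas T).toReal := by
    rw [hμT, ENNReal.toReal_ofReal (by linarith)]
    linarith
  -- key lower bound
  have key : ∀ S : Set ℝ, MeasurableSet S → S ⊆ Set.Icc θs θH → T ⊆ S →
      g θs * (F.meas S).toReal + (g θm - g θs) * (F.meas T).toReal
        ≤ ∫ θ in S, g θ ∂F.meas := by
    intro S hSm hS1 hS2
    have hSfin : F.meas S ≠ ⊤ := fun h =>
      hfin (top_le_iff.1 (h ▸ measure_mono hS1))
    have hintS : MeasureTheory.IntegrableOn g S F.meas := hint.mono_set hS1
    have hintT : MeasureTheory.IntegrableOn g T F.meas := hint.mono_set (hS2.trans hS1)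
    have hintD : MeasureTheory.IntegrableOn g (S \ T) F.meas := hintS.mono_set Set.diff_subset
    have hunion : S \ T ∪ T = S := Set.diff_union_of_subset hS2
    have hsplit := MeasureTheory.setIntegral_union (f := g) (μ := F.meas)
      (disjoint_sdiff_left) measurableSet_Ioc hintD hintT
    rw [hunion] at hsplit
    have hDlow : g θs * (F.meas (S \ T)).toReal ≤ ∫ θ in S \ T, g θ ∂F.meas := by
      have h := MeasureTheory.setIntegral_ge_of_const_le (hSm.diff measurableSet_Ioc)
        (fun h => hSfin (top_le_iff.1 (h ▸ measure_mono Set.diff_subset)))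
        (fun x hx => hgmono (hS1 hx.1).1) hintD
      rw [smul_eq_mul, mul_comm] at h; exact h
    have hTlow : g θm * (F.meas T).toReal ≤ ∫ θ in T, g θ ∂F.meas := by
      have h := MeasureTheory.setIntegral_ge_of_const_le measurableSet_Ioc hTfin
        (fun x hx => hgmono hx.1.le) hintT
      rw [smul_eq_mul, mul_comm] at h; exact h
    have hmeasD : (F.meas (S \ T)).toReal = (F.meas S).toReal - (F.meas T).toReal := by
      rw [measure_diff hS2 measurableSet_Ioc.nullMeasurableSet hTfin,
        ENNReal.toReal_sub_of_le (measure_mono hS2) hSfin]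
    rw [hmeasD, mul_sub] at hDlow
    nlinarith [hsplit, hDlow, hTlow]
  -- main strict inequality
  have hmain : ∀ S : Set ℝ, MeasurableSet S → S ⊆ Set.Icc θs θH → T ⊆ S →
      (∫ θ in S, κ' (Q θ) ∂F.meas) ≤ (F.meas S).toReal * θs → κ' (Q θs) < θs := by
    intro S hSm hS1 hS2 hle
    rw [hcongr S hSm hS1] at hle
    have hk := key S hSm hS1 hS2
    have hSfin : F.meas S ≠ ⊤ := fun h =>
      hfin (top_le_iff.1 (h ▸ measure_mono hS1))
    have hmSge : (F.meas T).toReal ≤ (F.meas S).toReal :=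
      ENNReal.toReal_mono hSfin (measure_mono hS2)
    have hd : 0 < (g θm - g θs) * (F.meas T).toReal := mul_pos (by linarith) hmT
    have hmul : g θs * (F.meas S).toReal < θs * (F.meas S).toReal := by nlinarith
    have := lt_of_mul_lt_mul_right hmul (by linarith)
    rwa [hgθs] at this
  have hTsubIoc : T ⊆ Set.Ioc θs θH := Set.Ioc_subset_Ioc_left hθm1.le
  have hTsubIcc : T ⊆ Set.Icc θs θH := hTsubIoc.trans Set.Ioc_subset_Icc_self
  have hmIoc : (F.meas (Set.Ioc θs θH)).toReal = 1 - F.toFun θs := by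
    show (F.stieltjes.measure _).toReal = _
    rw [StieltjesFunction.measure_Ioc]
    show (ENNReal.ofReal (F.toFun θH - F.toFun θs)).toReal = _
    rw [hF1, ENNReal.toReal_ofReal (by linarith)]
  have hmIcc : (F.meas (Set.Icc θs θH)).toReal = 1 - F.leftLim θs := by
    show (F.stieltjes.measure _).toReal = _
    rw [StieltjesFunction.measure_Icc]
    show (ENNReal.ofReal (F.toFun θH - F.leftLim θs)).toReal = _
    rw [hF1, ENNReal.toReal_ofReal (by linarith)]
  have hstrong_lt : (∫ θ in Set.Ioc θs θH, κ' (Q θ) ∂F.meas) ≤ (1 - F.toFun θs) * θs →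
      κ' (Q θs) < θs := by
    intro hs
    apply hmain (Set.Ioc θs θH) measurableSet_Ioc Set.Ioc_subset_Icc_self hTsubIoc
    rw [hmIoc]
    linarith [hs]
  have hweak_lt : (∫ θ in Set.Icc θs θH, κ' (Q θ) ∂F.meas) ≤ (1 - F.leftLim θs) * θs →
      κ' (Q θs) < θs := by
    intro hs
    apply hmain (Set.Icc θs θH) measurableSet_Icc Set.Subset.rfl hTsubIcc
    rw [hmIcc]
    linarith [hs]
  refine ⟨?_, fun hor => hor.elim hstrong_lt hweak_lt⟩
  intro hs
  have hlt := hstrong_lt hs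
  -- decompose Icc = {θs} ∪ Ioc
  have hμsing : F.meas {θs} = ENNReal.ofReal (F.toFun θs - F.leftLim θs) := by
    show F.stieltjes.measure _ = _
    rw [StieltjesFunction.measure_singleton]
    rfl
  have hμsingR : (F.meas {θs}).toReal = F.toFun θs - F.leftLim θs := by
    rw [hμsing, ENNReal.toReal_ofReal (by linarith)]
  have hsingsub : ({θs} : Set ℝ) ⊆ Set.Icc θs θH :=
    Set.singleton_subset_iff.2 ⟨le_rfl, hθsI.2.le⟩
  have hsplit := MeasureTheory.setIntegral_union (f := g) (μ := F.meas)
    (Set.disjoint_singleton_left.2 (by simp)) measurableSet_Ioc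
    (hint.mono_set hsingsub) (hint.mono_set Set.Ioc_subset_Icc_self)
  rw [Set.singleton_union, Set.Ioc_insert_left hθsI.2.le] at hsplit
  have hsing : ∫ θ in ({θs} : Set ℝ), g θ ∂F.meas = (F.meas {θs}).toReal * g θs := by
    rw [MeasureTheory.Measure.restrict_singleton, MeasureTheory.integral_smul_measure,
      MeasureTheory.integral_dirac, smul_eq_mul]
  rw [hcongr (Set.Icc θs θH) measurableSet_Icc Set.Subset.rfl, hsplit, hsing, hμsingR]
  rw [hcongr (Set.Ioc θs θH) measurableSet_Ioc Set.Ioc_subset_Icc_self] at hs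
  have hkey1 : (F.toFun θs - F.leftLim θs) * g θs ≤ (F.toFun θs - F.leftLim θs) * θs := by
    apply mul_le_mul_of_nonneg_left _ (by linarith)
    rw [hgθs]; exact hlt.le
  have hring : (1 - F.toFun θs) * θs + (F.toFun θs - F.leftLim θs) * θs
      = (1 - F.leftLim θs) * θs := by ring
  linarith
end

section
/- Let (Q, F) be monopolist-optimal with Q an F-ICC allocation. Then κ'(Q(θL_F)) < θL_F, i.e., quality is inefficiently low at the bottom of the support of F. Moreover, if Q(θL_F) > 0, then ∫_{[θL_F, θH]} κ'(Q(θ)) dF(θ) ≤ (1 − F₋(θL_F))·θL_F. -/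
open MeasureTheory Set Filter

section Helpers

variable {θL θH : ℝ}

lemma cdf_nonneg (F : CDF θL θH) (x : ℝ) : 0 ≤ F.toFun x := by
  have h0 : F.toFun (min x θL - 1) = 0 := F.eq_zero _ (by
    have := min_le_right x θL; linarith)
  have := F.mono (show min x θL - 1 ≤ x by have := min_le_left x θL; linarith)
  linarith

lemma cdf_le_one (F : CDF θL θH) (x : ℝ) : F.toFun x ≤ 1 := by
  have h1 : F.toFun (max x θH) = 1 := F.eq_one _ (le_max_right _ _)
  have := F.mono (le_max_left x θH)
  linarith

lemma cdf_tendsto_atBot (F : CDF θL θH) : Filter.Tendsto F.toFun Filter.atBot (nhds 0) := by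
  have h : F.toFun =ᶠ[Filter.atBot] (fun _ => (0:ℝ)) := by
    filter_upwards [Filter.eventually_le_atBot (θL - 1)] with x hx
    exact F.eq_zero x (by linarith)
  exact (tendsto_const_nhds.congr' h.symm)

lemma cdf_tendsto_atTop (F : CDF θL θH) : Filter.Tendsto F.toFun Filter.atTop (nhds 1) := by
  have h : F.toFun =ᶠ[Filter.atTop] (fun _ => (1:ℝ)) := by
    filter_upwards [Filter.eventually_ge_atTop θH] with x hx
    exact F.eq_one x hx
  exact (tendsto_const_nhds.congr' h.symm)

lemma cdf_isProb (F : CDF θL θH) : IsProbabilityMeasure F.meas :=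
  F.stieltjes.isProbabilityMeasure (cdf_tendsto_atBot F) (cdf_tendsto_atTop F)

lemma cdf_meas_Iic (F : CDF θL θH) (x : ℝ) :
    F.meas (Set.Iic x) = ENNReal.ofReal (F.toFun x) := by
  have := F.stieltjes.measure_Iic (cdf_tendsto_atBot F) x
  rw [sub_zero] at this
  exact this

lemma cdf_meas_Iio_eq_zero (F : CDF θL θH) {x : ℝ} (h : ∀ y < x, F.toFun y = 0) :
    F.meas (Set.Iio x) = 0 := by
  have hsub : Set.Iio x ⊆ ⋃ n : ℕ, Set.Iic (x - 1/(n+1)) := by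
    intro y hy
    obtain ⟨n, hn⟩ := exists_nat_one_div_lt (show (0:ℝ) < x - y by simpa using hy)
    exact Set.mem_iUnion.2 ⟨n, by simp only [Set.mem_Iic]; push_cast at hn ⊢; linarith⟩
  refine measure_mono_null hsub (measure_iUnion_null fun n => ?_)
  have hlt : x - 1/((n:ℝ)+1) < x := by
    have : (0:ℝ) < 1/((n:ℝ)+1) := by positivity
    linarith
  rw [cdf_meas_Iic, h _ hlt, ENNReal.ofReal_zero]

lemma cdf_meas_Ioi_eq_zero (F : CDF θL θH) : F.meas (Set.Ioi θH) = 0 := by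
  haveI := cdf_isProb F
  have : Set.Ioi θH = (Set.Iic θH)ᶜ := by simp
  rw [this, measure_compl measurableSet_Iic (measure_ne_top _ _), cdf_meas_Iic,
    F.eq_one θH le_rfl]
  simp

lemma cdf_ae_Icc (F : CDF θL θH) : ∀ᵐ x ∂F.meas, x ∈ Set.Icc θL θH := by
  have hcompl : {x | ¬ x ∈ Set.Icc θL θH} ⊆ Set.Iio θL ∪ Set.Ioi θH := by
    intro x hx
    simp only [Set.mem_setOf_eq, Set.mem_Icc, not_and_or, not_le] at hx
    rcases hx with h | h
    · exact Or.inl h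
    · exact Or.inr h
  refine measure_mono_null hcompl ?_
  refine measure_union_null ?_ (cdf_meas_Ioi_eq_zero F)
  exact cdf_meas_Iio_eq_zero F (fun y hy => F.eq_zero y hy)

lemma cdf_integrable_of (F : CDF θL θH) {f g : ℝ → ℝ} (hg : Measurable g)
    (heq : ∀ x ∈ Set.Icc θL θH, f x = g x) {M : ℝ}
    (hM : ∀ x ∈ Set.Icc θL θH, ‖f x‖ ≤ M) :
    MeasureTheory.Integrable f F.meas := by
  haveI := cdf_isProb F
  have hae : f =ᵐ[F.meas] g := by
    filter_upwards [cdf_ae_Icc F] with x hx using heq x hx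
  have hmeas : MeasureTheory.AEStronglyMeasurable f F.meas :=
    hg.aestronglyMeasurable.congr hae.symm
  refine MeasureTheory.Integrable.mono' (MeasureTheory.integrable_const M) hmeas ?_
  filter_upwards [cdf_ae_Icc F] with x hx using hM x hx

end Helpers
section SuppLemmas

variable {θL θH : ℝ}

lemma cdf_exists_supp_bot (F : CDF θL θH) :
    ∃ a ∈ F.supp, θL ≤ a ∧ a ≤ θH ∧ ∀ x < a, F.toFun x = 0 := by
  set S : Set ℝ := {x | F.toFun x = 0} with hS
  have hne : S.Nonempty := ⟨θL - 1, F.eq_zero _ (by linarith)⟩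
  have hbdd : BddAbove S := by
    refine ⟨θH, fun x hx => ?_⟩
    by_contra hc
    push_neg at hc
    have := F.eq_one x hc.le
    simp only [hS, Set.mem_setOf_eq] at hx
    linarith
  set a := sSup S with ha
  have hzero : ∀ x < a, F.toFun x = 0 := by
    intro x hx
    obtain ⟨y, hyS, hxy⟩ := exists_lt_of_lt_csSup hne hx
    have := F.mono hxy.le
    have h0 := cdf_nonneg F x
    simp only [hS, Set.mem_setOf_eq] at hyS
    linarith
  have hsupp : a ∈ F.supp := by
    intro ε hε
    have h1 : F.toFun (a - ε) = 0 := hzero _ (by linarith)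
    have h2 : 0 < F.toFun (a + ε) := by
      rcases lt_or_eq_of_le (cdf_nonneg F (a + ε)) with h | h
      · exact h
      · exfalso
        have : a + ε ∈ S := by simp [hS, ← h]
        have := le_csSup hbdd this
        linarith
    linarith
  have haL : θL ≤ a := by
    by_contra hc
    push_neg at hc
    have hmem : (θL + a)/2 ∈ S := F.eq_zero _ (by linarith)
    have := le_csSup hbdd hmem
    linarith
  have haH : a ≤ θH := csSup_le hne (fun x hx => by
    by_contra hc
    push_neg at hc
    have := F.eq_one x hc.le
    simp only [hS, Set.mem_setOf_eq] at hx
    linarith)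
  exact ⟨a, hsupp, haL, haH, hzero⟩

lemma cdf_exists_supp_top (F : CDF θL θH) :
    ∃ b ∈ F.supp, θL ≤ b ∧ b ≤ θH ∧ ∀ x, b < x → F.toFun x = 1 := by
  set S : Set ℝ := {x | F.toFun x = 1} with hS
  have hne : S.Nonempty := ⟨θH, F.eq_one _ le_rfl⟩
  have hbdd : BddBelow S := by
    refine ⟨θL, fun x hx => ?_⟩
    by_contra hc
    push_neg at hc
    have := F.eq_zero x hc
    simp only [hS, Set.mem_setOf_eq] at hx
    linarith
  set b := sInf S with hb
  have hone : ∀ x, b < x → F.toFun x = 1 := by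
    intro x hx
    obtain ⟨y, hyS, hxy⟩ := exists_lt_of_csInf_lt hne hx
    have := F.mono hxy.le
    have h1 := cdf_le_one F x
    simp only [hS, Set.mem_setOf_eq] at hyS
    linarith
  have hsupp : b ∈ F.supp := by
    intro ε hε
    have h1 : F.toFun (b + ε) = 1 := hone _ (by linarith)
    have h2 : F.toFun (b - ε) < 1 := by
      rcases lt_or_eq_of_le (cdf_le_one F (b - ε)) with h | h
      · exact h
      · exfalso
        have : b - ε ∈ S := by simp [hS, h]
        have := csInf_le hbdd this
        linarith
    linarith
  have hbL : θL ≤ b := le_csInf hne (fun x hx => by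
    by_contra hc
    push_neg at hc
    have := F.eq_zero x hc
    simp only [hS, Set.mem_setOf_eq] at hx
    linarith)
  have hbH : b ≤ θH := csInf_le hbdd (F.eq_one _ le_rfl)
  exact ⟨b, hsupp, hbL, hbH, hone⟩

lemma cdf_supp_subset (F : CDF θL θH) : F.supp ⊆ Set.Icc θL θH := by
  intro x hx
  by_contra hc
  simp only [Set.mem_Icc, not_and_or, not_le] at hc
  rcases hc with h | h
  · have := hx ((θL - x)/2) (by linarith)
    rw [F.eq_zero _ (by linarith), F.eq_zero _ (by linarith)] at this
    linarith
  · have := hx ((x - θH)/2) (by linarith)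
    rw [F.eq_one _ (by linarith), F.eq_one _ (by linarith)] at this
    linarith

lemma cdf_supp_nonempty (F : CDF θL θH) : F.supp.Nonempty := by
  obtain ⟨a, ha, _⟩ := cdf_exists_supp_bot F
  exact ⟨a, ha⟩

lemma thetaLF_mem_Icc (F : CDF θL θH) : thetaLF F ∈ Set.Icc θL θH := by
  obtain ⟨a, ha, haL, haH, _⟩ := cdf_exists_supp_bot F
  constructor
  · exact le_csInf (cdf_supp_nonempty F) (fun x hx => (cdf_supp_subset F hx).1)
  · exact le_trans (csInf_le ⟨θL, fun x hx => (cdf_supp_subset F hx).1⟩ ha) haH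

lemma thetaHF_mem_Icc (F : CDF θL θH) : thetaHF F ∈ Set.Icc θL θH := by
  obtain ⟨b, hb, hbL, hbH, _⟩ := cdf_exists_supp_top F
  constructor
  · exact le_trans hbL (le_csSup ⟨θH, fun x hx => (cdf_supp_subset F hx).2⟩ hb)
  · exact csSup_le (cdf_supp_nonempty F) (fun x hx => (cdf_supp_subset F hx).2)

lemma thetaLF_le_thetaHF (F : CDF θL θH) : thetaLF F ≤ thetaHF F :=
  csInf_le_csSup (cdf_supp_nonempty F) ⟨θL, fun x hx => (cdf_supp_subset F hx).1⟩
    ⟨θH, fun x hx => (cdf_supp_subset F hx).2⟩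

lemma cdf_eq_zero_below_thetaLF (F : CDF θL θH) {x : ℝ} (hx : x < thetaLF F) :
    F.toFun x = 0 := by
  obtain ⟨a, ha, haL, haH, hzero⟩ := cdf_exists_supp_bot F
  have : thetaLF F ≤ a := csInf_le ⟨θL, fun y hy => (cdf_supp_subset F hy).1⟩ ha
  exact hzero x (lt_of_lt_of_le hx this)

lemma cdf_eq_one_above_thetaHF (F : CDF θL θH) {x : ℝ} (hx : thetaHF F < x) :
    F.toFun x = 1 := by
  obtain ⟨b, hb, hbL, hbH, hone⟩ := cdf_exists_supp_top F
  have : b ≤ thetaHF F := le_csSup ⟨θH, fun y hy => (cdf_supp_subset F hy).2⟩ hb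
  exact hone x (lt_of_le_of_lt this hx)

lemma cdf_meas_Iio_thetaLF (F : CDF θL θH) : F.meas (Set.Iio (thetaLF F)) = 0 :=
  cdf_meas_Iio_eq_zero F (fun y hy => cdf_eq_zero_below_thetaLF F hy)

lemma cdf_leftLim_thetaLF (F : CDF θL θH) : F.leftLim (thetaLF F) = 0 := by
  have hne : (nhdsWithin (thetaLF F) (Set.Iio (thetaLF F))).NeBot := by infer_instance
  show Function.leftLim F.toFun (thetaLF F) = 0
  refine leftLim_eq_of_tendsto ?_
  have h : ∀ᶠ x in nhdsWithin (thetaLF F) (Set.Iio (thetaLF F)), F.toFun x = 0 := by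
    filter_upwards [self_mem_nhdsWithin] with x hx
    exact cdf_eq_zero_below_thetaLF F hx
  exact tendsto_const_nhds.congr' (by filter_upwards [h] with x hx using hx.symm)

lemma cdf_ae_Ici_thetaLF (F : CDF θL θH) : ∀ᵐ x ∂F.meas, thetaLF F ≤ x := by
  have : {x | ¬ thetaLF F ≤ x} ⊆ Set.Iio (thetaLF F) := fun x hx => by
    simp only [Set.mem_setOf_eq, not_le] at hx; exact hx
  exact measure_mono_null this (cdf_meas_Iio_thetaLF F)

end SuppLemmas
section MeanLemmas

variable {θL θH : ℝ}

lemma cdf_meas_Ioi_toReal (F : CDF θL θH) (y : ℝ) :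
    (F.meas (Set.Ioi y)).toReal = 1 - F.toFun y := by
  haveI := cdf_isProb F
  have h : Set.Ioi y = (Set.Iic y)ᶜ := (Set.compl_Iic).symm
  rw [h, measure_compl measurableSet_Iic (measure_ne_top _ _), cdf_meas_Iic, measure_univ,
    ENNReal.toReal_sub_of_le (ENNReal.ofReal_le_one.2 (cdf_le_one F y)) ENNReal.one_ne_top,
    ENNReal.toReal_one, ENNReal.toReal_ofReal (cdf_nonneg F y)]

lemma cdf_integral_id (hθ : θL < θH) (G : CDF θL θH) :
    (∫ x, x ∂G.meas) = θH - ∫ t in θL..θH, G.toFun t := by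
  haveI := cdf_isProb G
  have hint : MeasureTheory.Integrable (fun x => x - θL) G.meas := by
    refine cdf_integrable_of G (g := fun x => x - θL) (measurable_id.sub_const θL)
      (fun x _ => rfl) (M := θH - θL) (fun x hx => ?_)
    rw [Real.norm_eq_abs, abs_le]
    exact ⟨by linarith [hx.1], by linarith [hx.2]⟩
  have hnn : 0 ≤ᵐ[G.meas] (fun x => x - θL) := by
    filter_upwards [cdf_ae_Icc G] with x hx
    simp only [Pi.zero_apply, sub_nonneg]
    exact hx.1
  have key := hint.integral_eq_integral_meas_lt hnn
  set T := θH - θL with hT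
  have hTpos : 0 < T := by simp [hT]; linarith
  set g : ℝ → ℝ := fun t => 1 - G.toFun (θL + t) with hg
  have hgmeas : Measurable g := by
    have : Monotone (fun t => G.toFun (θL + t)) := fun a b hab => G.mono (by linarith)
    exact (measurable_const.sub this.measurable)
  have hkey2 : ∀ t : ℝ, (G.meas {a : ℝ | t < a - θL}).toReal = g t := by
    intro t
    have : {a : ℝ | t < a - θL} = Set.Ioi (θL + t) := by
      ext a; simp [Set.mem_Ioi, lt_sub_iff_add_lt']
    rw [this, cdf_meas_Ioi_toReal]
  have hzero : ∀ t ∈ Set.Ioi T, g t = 0 := by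
    intro t ht
    simp only [Set.mem_Ioi] at ht
    rw [hg]
    simp only []
    rw [G.eq_one _ (by linarith)]
    ring
  have hIoc : MeasureTheory.IntegrableOn g (Set.Ioc 0 T) := by
    refine MeasureTheory.Integrable.mono' (g := fun _ => (1:ℝ))
      (MeasureTheory.integrableOn_const measure_Ioc_lt_top.ne)
      hgmeas.aestronglyMeasurable.restrict ?_
    refine MeasureTheory.ae_of_all _ fun t => ?_
    rw [Real.norm_eq_abs, abs_le]
    constructor
    · have := cdf_le_one G (θL + t); simp only [hg]; linarith
    · have := cdf_nonneg G (θL + t); simp only [hg]; linarith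
  have hIoi : MeasureTheory.IntegrableOn g (Set.Ioi T) := by
    refine (MeasureTheory.integrableOn_congr_fun hzero measurableSet_Ioi).2 ?_
    exact MeasureTheory.integrableOn_zero
  have hsplit : ∫ t in Set.Ioi 0, g t = ∫ t in Set.Ioc 0 T, g t := by
    rw [← Set.Ioc_union_Ioi_eq_Ioi hTpos.le,
      MeasureTheory.setIntegral_union (Set.Ioc_disjoint_Ioi le_rfl) measurableSet_Ioi hIoc hIoi]
    have : ∫ t in Set.Ioi T, g t = 0 := by
      rw [MeasureTheory.setIntegral_congr_fun measurableSet_Ioi hzero]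
      simp
    rw [this, add_zero]
  have hinterval : ∫ t in Set.Ioc 0 T, g t = ∫ t in (0:ℝ)..T, g t :=
    (intervalIntegral.integral_of_le hTpos.le).symm
  have hcomp : ∫ t in (0:ℝ)..T, G.toFun (θL + t) = ∫ s in θL..θH, G.toFun s := by
    rw [intervalIntegral.integral_comp_add_left (fun s => G.toFun s) θL]
    norm_num [hT]
  have hsub : ∫ t in (0:ℝ)..T, g t = T - ∫ s in θL..θH, G.toFun s := by
    have h1 : IntervalIntegrable (fun _ => (1:ℝ)) MeasureTheory.volume 0 T :=
      intervalIntegrable_const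
    have h2 : IntervalIntegrable (fun t => G.toFun (θL + t)) MeasureTheory.volume 0 T := by
      have : Monotone (fun t => G.toFun (θL + t)) := fun a b hab => G.mono (by linarith)
      exact this.intervalIntegrable
    rw [hg]
    rw [intervalIntegral.integral_sub h1 h2, hcomp]
    simp
  have hid : (∫ x, x ∂G.meas) = (∫ x, (x - θL) ∂G.meas) + θL := by
    have := MeasureTheory.integral_add hint (MeasureTheory.integrable_const (μ := G.meas) θL)
    simp only [sub_add_cancel] at this
    rw [this, MeasureTheory.integral_const]
    simp
  rw [hid, key]
  have : ∫ t in Set.Ioi 0, G.meas.real {a : ℝ | t < a - θL} = ∫ t in Set.Ioi 0, g t :=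
    MeasureTheory.integral_congr_ae (MeasureTheory.ae_of_all _ fun t => hkey2 t)
  rw [this, hsplit, hinterval, hsub]
  simp [hT]
  ring

lemma signal_integral_cdf {F₀ G : CDF θL θH} (h : IsSignal F₀ G) :
    ∫ t in θL..θH, G.toFun t = ∫ t in θL..θH, F₀.toFun t := by
  have h2 := h.2
  unfold IFun at h2
  rw [intervalIntegral.integral_sub F₀.mono.intervalIntegrable G.mono.intervalIntegrable] at h2
  linarith

lemma signal_mean_eq (hθ : θL < θH) {F₀ G1 G2 : CDF θL θH}
    (h1 : IsSignal F₀ G1) (h2 : IsSignal F₀ G2) :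
    (∫ x, x ∂G1.meas) = ∫ x, x ∂G2.meas := by
  rw [cdf_integral_id hθ, cdf_integral_id hθ, signal_integral_cdf h1, signal_integral_cdf h2]

end MeanLemmas
section EndpointLemmas

variable {θL θH : ℝ}

lemma int_cdf_lt_of_supp_top (hθ : θL < θH) (F₀ : CDF θL θH) (hH : θH ∈ F₀.supp) :
    ∫ t in θL..θH, F₀.toFun t < θH - θL := by
  set m := (θL + θH)/2 with hm
  have hm1 : θL < m := by rw [hm]; linarith
  have hm2 : m < θH := by rw [hm]; linarith
  have hc1 : F₀.toFun m < 1 := by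
    have h := hH (θH - m) (by linarith)
    have h1 : F₀.toFun (θH + (θH - m)) = 1 := F₀.eq_one _ (by linarith)
    have h2 : θH - (θH - m) = m := by ring
    rw [h2] at h
    linarith
  have hsplit := intervalIntegral.integral_add_adjacent_intervals (μ := MeasureTheory.volume) (a := θL) (b := m) (c := θH)
    (F₀.mono.intervalIntegrable) (F₀.mono.intervalIntegrable)
  have hb1 : ∫ t in θL..m, F₀.toFun t ≤ (m - θL) * F₀.toFun m := by
    have := intervalIntegral.integral_mono_on (μ := MeasureTheory.volume) (f := F₀.toFun) (g := fun _ => F₀.toFun m)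
      hm1.le F₀.mono.intervalIntegrable intervalIntegrable_const
      (fun x hx => F₀.mono hx.2)
    simpa using this
  have hb2 : ∫ t in m..θH, F₀.toFun t ≤ (θH - m) * 1 := by
    have := intervalIntegral.integral_mono_on (μ := MeasureTheory.volume) (f := F₀.toFun) (g := fun _ => (1:ℝ))
      hm2.le F₀.mono.intervalIntegrable intervalIntegrable_const
      (fun x _ => cdf_le_one F₀ x)
    simpa using this
  have : (m - θL) * F₀.toFun m < (m - θL) * 1 := by
    apply mul_lt_mul_of_pos_left hc1 (by linarith)
  nlinarith [hsplit, hb1, hb2]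

lemma int_cdf_pos_of_supp_bot (hθ : θL < θH) (F₀ : CDF θL θH) (hL : θL ∈ F₀.supp) :
    0 < ∫ t in θL..θH, F₀.toFun t := by
  set m := (θL + θH)/2 with hm
  have hm1 : θL < m := by rw [hm]; linarith
  have hm2 : m < θH := by rw [hm]; linarith
  have hc1 : 0 < F₀.toFun m := by
    have h := hL (m - θL) (by linarith)
    have h1 : F₀.toFun (θL - (m - θL)) = 0 := F₀.eq_zero _ (by linarith)
    have h2 : θL + (m - θL) = m := by ring
    rw [h2, h1] at h
    linarith
  have hsplit := intervalIntegral.integral_add_adjacent_intervals (μ := MeasureTheory.volume) (a := θL) (b := m) (c := θH)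
    (F₀.mono.intervalIntegrable) (F₀.mono.intervalIntegrable)
  have hb1 : (0:ℝ) ≤ ∫ t in θL..m, F₀.toFun t :=
    intervalIntegral.integral_nonneg hm1.le (fun x _ => cdf_nonneg F₀ x)
  have hb2 : (θH - m) * F₀.toFun m ≤ ∫ t in m..θH, F₀.toFun t := by
    have := intervalIntegral.integral_mono_on (μ := MeasureTheory.volume) (f := fun _ => F₀.toFun m) (g := F₀.toFun)
      hm2.le intervalIntegrable_const F₀.mono.intervalIntegrable
      (fun x hx => F₀.mono hx.1)
    simpa using this
  nlinarith [hsplit, hb1, hb2]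

lemma cdf_integral_of_point (F : CDF θL θH) {m : ℝ} (hmL : θL ≤ m) (hmH : m ≤ θH)
    (h0 : ∀ x < m, F.toFun x = 0) (h1 : ∀ x, m < x → F.toFun x = 1) :
    ∫ t in θL..θH, F.toFun t = θH - m := by
  have hne : ∀ᵐ (x : ℝ), x ≠ m := by
    rw [MeasureTheory.ae_iff]
    have : {a : ℝ | ¬a ≠ m} = {m} := by ext a; simp
    rw [this]
    exact MeasureTheory.measure_singleton m
  have e1 : ∫ t in θL..m, F.toFun t = 0 := by
    rw [intervalIntegral.integral_congr_ae (g := fun _ => (0:ℝ)) ?_]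
    · simp
    · filter_upwards [hne] with x hx hmem
      rw [Set.uIoc_of_le hmL] at hmem
      exact h0 x (lt_of_le_of_ne hmem.2 hx)
  have e2 : ∫ t in m..θH, F.toFun t = θH - m := by
    rw [intervalIntegral.integral_congr_ae (g := fun _ => (1:ℝ)) ?_]
    · simp
    · filter_upwards with x hmem
      rw [Set.uIoc_of_le hmH] at hmem
      exact h1 x hmem.1
  rw [← intervalIntegral.integral_add_adjacent_intervals (μ := MeasureTheory.volume) (a := θL) (b := m) (c := θH)
    (F.mono.intervalIntegrable) (F.mono.intervalIntegrable), e1, e2, zero_add]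

end EndpointLemmas

section KappaLemmas

variable {θL θH qbar : ℝ} {κ κ' : ℝ → ℝ}

lemma kappa_continuousOn (hκ : KappaAssumptions θL θH qbar κ κ') :
    ContinuousOn κ (Set.Icc 0 qbar) :=
  fun q hq => (hκ.hasDeriv q hq).continuousWithinAt

lemma kappa_deriv_le_slope (hκ : KappaAssumptions θL θH qbar κ κ') {y x : ℝ}
    (hy : y ∈ Set.Icc 0 qbar) (hx : x ∈ Set.Icc 0 qbar) (hyx : y < x) :
    κ' y * (x - y) ≤ κ x - κ y := by
  have hconv := hκ.strictConvex.convexOn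
  have h := hconv.le_slope_of_hasDerivWithinAt hy hx hyx (hκ.hasDeriv y hy)
  rw [slope_def_field] at h
  have hpos : 0 < x - y := by linarith
  calc κ' y * (x - y) ≤ ((κ x - κ y)/(x - y)) * (x - y) :=
        mul_le_mul_of_nonneg_right h hpos.le
    _ = κ x - κ y := div_mul_cancel₀ _ hpos.ne'

lemma kappa_slope_le_deriv (hκ : KappaAssumptions θL θH qbar κ κ') {y x : ℝ}
    (hy : y ∈ Set.Icc 0 qbar) (hx : x ∈ Set.Icc 0 qbar) (hyx : y < x) :
    κ x - κ y ≤ κ' x * (x - y) := by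
  have hconv := hκ.strictConvex.convexOn
  have h := hconv.slope_le_of_hasDerivWithinAt hy hx hyx (hκ.hasDeriv x hx)
  rw [slope_def_field] at h
  have hpos : 0 < x - y := by linarith
  calc κ x - κ y = ((κ x - κ y)/(x - y)) * (x - y) := (div_mul_cancel₀ _ hpos.ne').symm
    _ ≤ κ' x * (x - y) := mul_le_mul_of_nonneg_right h hpos.le

lemma kappa_deriv_mono (hκ : KappaAssumptions θL θH qbar κ κ') :
    MonotoneOn κ' (Set.Icc 0 qbar) := by
  intro a ha b hb hab
  rcases eq_or_lt_of_le hab with rfl | h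
  · exact le_rfl
  · have h1 := kappa_deriv_le_slope hκ ha hb h
    have h2 := kappa_slope_le_deriv hκ ha hb h
    have hpos : 0 < b - a := by linarith
    nlinarith

end KappaLemmas
set_option maxHeartbeats 1000000 in
theorem statement18 {θL θH : ℝ} (hθL : 0 ≤ θL) (hθ : θL < θH)
    (F₀ : CDF θL θH) (hF₀ : IsPrior F₀)
    (c c' c'' : ℝ → ℝ) (hc : CostAssumptions θL θH F₀.mean c c' c'')
    (qbar : ℝ) (hqbar : 0 < qbar)
    (κ κ' : ℝ → ℝ) (hκ : KappaAssumptions θL θH qbar κ κ')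
    (Q : ℝ → ℝ) (F : CDF θL θH)
    (hopt : MonopolistOptimal qbar F₀ c κ Q F)
    (hICC : IsICC qbar F₀ c' F Q) :
    κ' (Q (thetaLF F)) < thetaLF F ∧
    (0 < Q (thetaLF F) →
      (∫ θ in Set.Icc (thetaLF F) θH, κ' (Q θ) ∂F.meas) ≤
        (1 - F.leftLim (thetaLF F)) * thetaLF F) := by
  classical
  obtain ⟨⟨hQmono, hQmem⟩, ⟨hFsig, hFbest⟩, hoptim⟩ := hopt
  obtain ⟨p, ⟨⟨M, hpM⟩, hpmono, hpflat, hpbot, hptop⟩, hQICC⟩ := hICC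
  haveI := cdf_isProb F
  set tL := thetaLF F with htLdef
  set tH := thetaHF F with htHdef
  have htLmem : tL ∈ Set.Icc θL θH := thetaLF_mem_Icc F
  have htHmem : tH ∈ Set.Icc θL θH := thetaHF_mem_Icc F
  have htLH : tL ≤ tH := thetaLF_le_thetaHF F
  have hQmid : ∀ θ ∈ Set.Icc θL θH, tL ≤ θ → θ ≤ tH → Q θ = p θ + c' θ := by
    intro θ hθ1 h1 h2
    rw [hQICC θ hθ1]
    unfold inducedAlloc
    rw [if_neg (not_lt.2 h1), if_pos h2]
  have hQlow : ∀ θ ∈ Set.Icc θL θH, θ < tL → Q θ = max (p tL + c' θ) 0 := by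
    intro θ hθ1 h1
    rw [hQICC θ hθ1]
    unfold inducedAlloc
    rw [if_pos h1]
  have htLIoo : θL < tL ∧ tL < θH := by
    rcases lt_or_eq_of_le htLH with hlt | heq
    · constructor
      · by_contra hcon
        push_neg at hcon
        have htleq : tL = θL := le_antisymm hcon htLmem.1
        have hev1 : ∀ᶠ θ in nhdsWithin θL (Set.Ioi θL), c' θ < -(M+1) :=
          hc.slopeBot.eventually (Filter.eventually_lt_atBot (-(M+1)))
        have hev2 : ∀ᶠ θ in nhdsWithin θL (Set.Ioi θL), θ ∈ Set.Ioo θL tH :=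
          Ioo_mem_nhdsGT_of_mem ⟨le_rfl, htleq ▸ hlt⟩
        obtain ⟨θ', hθ'1, hθ'2⟩ := (hev1.and hev2).exists
        have hθ'mem : θ' ∈ Set.Icc θL θH := ⟨hθ'2.1.le, hθ'2.2.le.trans htHmem.2⟩
        have hQeq : Q θ' = p θ' + c' θ' :=
          hQmid θ' hθ'mem (htleq ▸ hθ'2.1.le) hθ'2.2.le
        have h0 : 0 ≤ Q θ' := (hQmem θ' hθ'mem).1
        have hpb := hpM θ' hθ'mem
        rw [abs_le] at hpb
        linarith [hpb.2]
      · exact lt_of_lt_of_le hlt htHmem.2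
    · have h0 : ∀ x < tL, F.toFun x = 0 := fun x hx => cdf_eq_zero_below_thetaLF F hx
      have h1 : ∀ x, tL < x → F.toFun x = 1 := fun x hx =>
        cdf_eq_one_above_thetaHF F (show tH < x from heq ▸ hx)
      have hpoint := cdf_integral_of_point F htLmem.1 htLmem.2 h0 h1
      have hFint := signal_integral_cdf hFsig
      have hlow := int_cdf_pos_of_supp_bot hθ F₀ hF₀.1
      have hhigh := int_cdf_lt_of_supp_top hθ F₀ hF₀.2
      constructor
      · nlinarith
      · nlinarith
  obtain ⟨htL1, htL2⟩ := htLIoo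
  set q₀ := Q tL with hq₀def
  have hq₀mem : q₀ ∈ Set.Icc 0 qbar := hQmem tL htLmem
  rcases le_or_gt q₀ 0 with hq0 | hq0
  · have hq₀eq : q₀ = 0 := le_antisymm hq0 hq₀mem.1
    constructor
    · rw [hq₀eq]
      exact lt_of_le_of_lt hκ.derivZero htL1
    · intro hpos
      rw [hq₀eq] at hpos
      linarith
  · -- main case : 0 < q₀
    have htLIoo' : tL ∈ Set.Ioo θL θH := ⟨htL1, htL2⟩
    have hc'cont : ContinuousAt c' tL := (hc.hasDeriv2 tL htLIoo').continuousAt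
    rw [Metric.continuousAt_iff] at hc'cont
    obtain ⟨δ₁, hδ₁pos, hball⟩ := hc'cont (q₀/2) (by positivity)
    set δ₀ := min (δ₁/2) ((tL - θL)/2) with hδ₀def
    have hδ₀pos : 0 < δ₀ := lt_min (by linarith) (by linarith)
    have hδ₀lt : δ₀ < δ₁ := lt_of_le_of_lt (min_le_left _ _) (by linarith)
    have hδ₀L : θL < tL - δ₀ := by
      have h2 : δ₀ ≤ (tL - θL)/2 := min_le_right _ _
      linarith
    have hq₀eq2 : q₀ = p tL + c' tL := hQmid tL htLmem le_rfl htLH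
    have hQnear : ∀ t ∈ Set.Icc (tL - δ₀) tL, q₀/2 ≤ Q t := by
      intro t ht
      rcases lt_or_eq_of_le ht.2 with hlt | heq
      · have htmem : t ∈ Set.Icc θL θH := ⟨by linarith [ht.1], by linarith [ht.2, htLmem.2]⟩
        rw [hQlow t htmem hlt]
        have hdist : dist t tL < δ₁ := by
          rw [Real.dist_eq, abs_lt]
          constructor <;> linarith [ht.1, ht.2]
        have hb := hball hdist
        rw [Real.dist_eq, abs_lt] at hb
        have : q₀/2 ≤ p tL + c' t := by linarith [hb.1, hb.2]
        exact le_trans this (le_max_left _ _)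
      · rw [heq]; linarith
    set clampθ : ℝ → ℝ := fun θ => max θL (min θ θH) with hclampθdef
    have hclampθ_mono : Monotone clampθ := fun a b hab =>
      max_le_max le_rfl (min_le_min hab le_rfl)
    have hclampθ_cont : Continuous clampθ :=
      continuous_const.max (continuous_id.min continuous_const)
    have hclampθ_mem : ∀ θ, clampθ θ ∈ Set.Icc θL θH := fun θ =>
      ⟨le_max_left _ _, max_le hθ.le (min_le_right _ _)⟩
    have hclampθ_id : ∀ θ ∈ Set.Icc θL θH, clampθ θ = θ := fun θ hθ' => by
      rw [hclampθdef]
      simp only []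
      rw [min_eq_left hθ'.2, max_eq_right hθ'.1]
    set Qc : ℝ → ℝ := fun θ => Q (clampθ θ) with hQcdef
    have hQcmono : Monotone Qc := fun a b hab =>
      hQmono (hclampθ_mem a) (hclampθ_mem b) (hclampθ_mono hab)
    have hQcmem : ∀ θ, Qc θ ∈ Set.Icc 0 qbar := fun θ => hQmem _ (hclampθ_mem θ)
    have hQceq : ∀ θ ∈ Set.Icc θL θH, Qc θ = Q θ := fun θ hθ' => by
      rw [hQcdef]; simp only []; rw [hclampθ_id θ hθ']
    have hQcmeas : Measurable Qc := hQcmono.measurable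
    have hQcint : ∀ a b : ℝ, IntervalIntegrable Qc MeasureTheory.volume a b :=
      fun a b => hQcmono.intervalIntegrable
    set VQ : ℝ → ℝ := fun θ => ∫ t in θL..θ, Qc t with hVQdef
    have hVQmono : Monotone VQ := by
      intro a b hab
      rw [hVQdef]
      simp only []
      rw [← intervalIntegral.integral_add_adjacent_intervals (μ := MeasureTheory.volume)
        (a := θL) (b := a) (c := b) (hQcint _ _) (hQcint _ _)]
      have : 0 ≤ ∫ t in a..b, Qc t :=
        intervalIntegral.integral_nonneg hab (fun x _ => (hQcmem x).1)
      linarith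
    have hVQmeas : Measurable VQ := hVQmono.measurable
    have hVfunQ : ∀ θ ∈ Set.Icc θL θH, Vfun θL Q 0 θ = VQ θ := by
      intro θ hθ'
      unfold Vfun
      rw [zero_add]
      refine intervalIntegral.integral_congr (fun t ht => ?_)
      rw [Set.uIcc_of_le hθ'.1] at ht
      exact (hQceq t ⟨ht.1, ht.2.trans hθ'.2⟩).symm
    have hVQbdd : ∀ θ ∈ Set.Icc θL θH, 0 ≤ VQ θ ∧ VQ θ ≤ qbar * (θH - θL) := by
      intro θ hθ'
      constructor
      · exact intervalIntegral.integral_nonneg hθ'.1 (fun x _ => (hQcmem x).1)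
      · have h1 : VQ θ ≤ ∫ _t in θL..θ, qbar :=
          intervalIntegral.integral_mono_on (μ := MeasureTheory.volume) hθ'.1 (hQcint _ _)
            intervalIntegrable_const (fun x _ => (hQcmem x).2)
        rw [intervalIntegral.integral_const, smul_eq_mul] at h1
        nlinarith [hθ'.1, hθ'.2]
    obtain ⟨Mc, hMc⟩ := IsCompact.exists_bound_of_continuousOn isCompact_Icc hc.cont
    obtain ⟨Mκ, hMκ⟩ := IsCompact.exists_bound_of_continuousOn isCompact_Icc (kappa_continuousOn hκ)
    obtain ⟨Mκ', hMκ'⟩ := IsCompact.exists_bound_of_continuousOn isCompact_Icc hκ.contDeriv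
    set clampq : ℝ → ℝ := fun q => max 0 (min q qbar) with hclampqdef
    have hclampq_cont : Continuous clampq :=
      continuous_const.max (continuous_id.min continuous_const)
    have hclampq_mem : ∀ q, clampq q ∈ Set.Icc 0 qbar := fun q =>
      ⟨le_max_left _ _, max_le hqbar.le (min_le_right _ _)⟩
    have hclampq_id : ∀ q ∈ Set.Icc 0 qbar, clampq q = q := fun q hq => by
      rw [hclampqdef]; simp only []; rw [min_eq_left hq.2, max_eq_right hq.1]
    set κc : ℝ → ℝ := fun q => κ (clampq q) with hκcdef
    set κ'c : ℝ → ℝ := fun q => κ' (clampq q) with hκ'cdef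
    have hκc_cont : Continuous κc :=
      (kappa_continuousOn hκ).comp_continuous hclampq_cont hclampq_mem
    have hκ'c_cont : Continuous κ'c :=
      hκ.contDeriv.comp_continuous hclampq_cont hclampq_mem
    have hκcb : ∀ q, ‖κc q‖ ≤ Mκ := fun q => hMκ _ (hclampq_mem q)
    have hκ'cb : ∀ q, ‖κ'c q‖ ≤ Mκ' := fun q => hMκ' _ (hclampq_mem q)
    have habsB : ∀ x ∈ Set.Icc θL θH, |x| ≤ |θL| + |θH| := by
      intro x hx
      rw [abs_le]
      constructor
      · calc -(|θL| + |θH|) ≤ -|θL| := by linarith [abs_nonneg θH]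
          _ ≤ θL := neg_abs_le θL
          _ ≤ x := hx.1
      · calc x ≤ θH := hx.2
          _ ≤ |θH| := le_abs_self θH
          _ ≤ |θL| + |θH| := by linarith [abs_nonneg θL]
    have hidint : ∀ G : CDF θL θH, MeasureTheory.Integrable (fun x => x) G.meas := by
      intro G
      exact cdf_integrable_of G measurable_id (fun x _ => rfl) (M := |θL| + |θH|)
        (fun x hx => by rw [Real.norm_eq_abs]; exact habsB x hx)
    have hVcint : ∀ G : CDF θL θH,
        MeasureTheory.Integrable (fun θ => Vfun θL Q 0 θ - c θ) G.meas := by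
      intro G
      refine cdf_integrable_of G (g := fun θ => VQ θ - c (clampθ θ))
        (hVQmeas.sub ((hc.cont.comp_continuous hclampθ_cont hclampθ_mem).measurable))
        (fun x hx => by
          show Vfun θL Q 0 x - c x = VQ x - c (clampθ x)
          rw [hVfunQ x hx, hclampθ_id x hx]) (M := qbar*(θH-θL) + Mc)
        (fun x hx => ?_)
      have h1 := hVQbdd x hx
      have h2 := hMc x hx
      rw [Real.norm_eq_abs] at h2 ⊢
      rw [hVfunQ x hx, abs_le]
      rw [abs_le] at h2
      constructor <;> linarith [h1.1, h1.2, h2.1, h2.2]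
    -- the key inequality for every small ε
    have main : ∀ ε : ℝ, 0 < ε → ε ≤ q₀/2 →
        (∫ θ, κ'c (Qc θ - ε) ∂F.meas) ≤ tL - δ₀ := by
      intro ε hε0 hεle
      set Qε : ℝ → ℝ := fun t => max (Q t - ε) 0 with hQεdef
      set minQ : ℝ → ℝ := fun t => min (Qc t) ε with hminQdef
      have hminQmono : Monotone minQ := fun a b hab => min_le_min (hQcmono hab) le_rfl
      have hminQmeas : Measurable minQ := hminQmono.measurable
      have hminQnn : ∀ t, 0 ≤ minQ t := fun t => le_min (hQcmem t).1 hε0.le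
      have hminQle : ∀ t, minQ t ≤ ε := fun t => min_le_right _ _
      have hminQleQc : ∀ t, minQ t ≤ Qc t := fun t => min_le_left _ _
      have hminQint : ∀ a b : ℝ, IntervalIntegrable minQ MeasureTheory.volume a b :=
        fun a b => hminQmono.intervalIntegrable
      set hh : ℝ → ℝ := fun θ => ∫ t in θL..θ, minQ t with hhhdef
      have hhmono : Monotone hh := by
        intro a b hab
        rw [hhhdef]
        simp only []
        rw [← intervalIntegral.integral_add_adjacent_intervals (μ := MeasureTheory.volume)
          (a := θL) (b := a) (c := b) (hminQint _ _) (hminQint _ _)]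
        have : 0 ≤ ∫ t in a..b, minQ t :=
          intervalIntegral.integral_nonneg hab (fun x _ => hminQnn x)
        linarith
      have hhmeas : Measurable hh := hhmono.measurable
      set C := hh tL with hCdef
      set ll : ℝ → ℝ := fun θ => C + ε * (θ - tL) with hlldef
      have hQεeq : ∀ t ∈ Set.Icc θL θH, Qε t = Qc t - minQ t := by
        intro t ht
        rw [hQεdef, hminQdef]
        simp only []
        rw [← hQceq t ht]
        rcases le_total (Qc t) ε with h | h
        · rw [min_eq_left h, max_eq_right (by linarith), sub_self]
        · rw [min_eq_right h, max_eq_left (by linarith)]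
      have hVεeq : ∀ θ ∈ Set.Icc θL θH, Vfun θL Qε 0 θ = VQ θ - hh θ := by
        intro θ hθ'
        unfold Vfun
        rw [zero_add]
        have e1 : ∫ t in θL..θ, Qε t = ∫ t in θL..θ, (Qc t - minQ t) := by
          refine intervalIntegral.integral_congr (fun t ht => ?_)
          rw [Set.uIcc_of_le hθ'.1] at ht
          exact hQεeq t ⟨ht.1, ht.2.trans hθ'.2⟩
        rw [e1, intervalIntegral.integral_sub (hQcint _ _) (hminQint _ _)]
      have hℓeq : ∀ θ ∈ Set.Icc tL θH, hh θ = ll θ := by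
        intro θ hθ'
        have hsplit : hh tL + ∫ t in tL..θ, minQ t = hh θ := by
          rw [hhhdef]
          exact intervalIntegral.integral_add_adjacent_intervals (μ := MeasureTheory.volume)
            (hminQint _ _) (hminQint _ _)
        have hconst : ∫ t in tL..θ, minQ t = ε * (θ - tL) := by
          rw [intervalIntegral.integral_congr (g := fun _ => ε) (fun t ht => ?_),
            intervalIntegral.integral_const, smul_eq_mul, mul_comm]
          rw [Set.uIcc_of_le hθ'.1] at ht
          have htmem : t ∈ Set.Icc θL θH := ⟨htLmem.1.trans ht.1, ht.2.trans hθ'.2⟩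
          have hQt : q₀ ≤ Q t := hQmono htLmem htmem ht.1
          rw [hminQdef]
          simp only []
          rw [hQceq t htmem]
          exact min_eq_right (by linarith)
        rw [hlldef]
        simp only []
        rw [hCdef]
        linarith [hsplit, hconst]
      have hℓle : ∀ θ ∈ Set.Icc θL θH, ll θ ≤ hh θ := by
        intro θ hθ'
        rcases le_total tL θ with h | h
        · exact (hℓeq θ ⟨h, hθ'.2⟩).symm.le
        · have hsplit : hh θ + ∫ t in θ..tL, minQ t = C := by
            rw [hCdef, hhhdef]
            exact intervalIntegral.integral_add_adjacent_intervals (μ := MeasureTheory.volume)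
              (hminQint _ _) (hminQint _ _)
          have hbound : ∫ t in θ..tL, minQ t ≤ ε * (tL - θ) := by
            have h1 : ∫ t in θ..tL, minQ t ≤ ∫ _t in θ..tL, ε :=
              intervalIntegral.integral_mono_on (μ := MeasureTheory.volume) h (hminQint _ _)
                intervalIntegrable_const (fun x _ => hminQle x)
            rw [intervalIntegral.integral_const, smul_eq_mul] at h1
            linarith [h1]
          rw [hlldef]
          simp only []
          linarith [hsplit, hbound]
      have hCge : ε * δ₀ ≤ C := by
        have hsplit : (∫ t in θL..(tL - δ₀), minQ t) + ∫ t in (tL - δ₀)..tL, minQ t = C := by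
          rw [hCdef, hhhdef]
          exact intervalIntegral.integral_add_adjacent_intervals (μ := MeasureTheory.volume)
            (hminQint _ _) (hminQint _ _)
        have h1 : 0 ≤ ∫ t in θL..(tL - δ₀), minQ t :=
          intervalIntegral.integral_nonneg (by linarith) (fun x _ => hminQnn x)
        have h2 : ∫ t in (tL - δ₀)..tL, minQ t = ε * δ₀ := by
          rw [intervalIntegral.integral_congr (g := fun _ => ε) (fun t ht => ?_),
            intervalIntegral.integral_const, smul_eq_mul]
          · ring
          · rw [Set.uIcc_of_le (by linarith)] at ht
            have htmem : t ∈ Set.Icc θL θH := ⟨by linarith [ht.1], by linarith [ht.2, htLmem.2]⟩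
            have := hQnear t ⟨ht.1, ht.2⟩
            rw [hminQdef]
            simp only []
            rw [hQceq t htmem]
            exact min_eq_right (by linarith)
        linarith
      have hhbdd : ∀ θ ∈ Set.Icc θL θH, ‖hh θ‖ ≤ ε * (θH - θL) := by
        intro θ hθ'
        have h0 : 0 ≤ hh θ :=
          intervalIntegral.integral_nonneg hθ'.1 (fun x _ => hminQnn x)
        have h1 : hh θ ≤ ∫ _t in θL..θ, ε :=
          intervalIntegral.integral_mono_on (μ := MeasureTheory.volume) hθ'.1 (hminQint _ _)
            intervalIntegrable_const (fun x _ => hminQle x)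
        rw [intervalIntegral.integral_const, smul_eq_mul] at h1
        rw [Real.norm_eq_abs, abs_le]
        constructor
        · nlinarith
        · nlinarith [hθ'.2]
      have hhint : ∀ G : CDF θL θH, MeasureTheory.Integrable hh G.meas := fun G =>
        cdf_integrable_of G hhmeas (fun x _ => rfl) hhbdd
      have hllint : ∀ G : CDF θL θH, MeasureTheory.Integrable ll G.meas := by
        intro G
        haveI := cdf_isProb G
        have h1 := ((hidint G).const_mul ε).add (MeasureTheory.integrable_const (C - ε*tL))
        refine h1.congr (MeasureTheory.ae_of_all _ fun x => ?_)
        simp only [Pi.add_apply, hlldef]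
        ring
      have hllval : ∀ G : CDF θL θH,
          (∫ θ, ll θ ∂G.meas) = ε * (∫ x, x ∂G.meas) + (C - ε * tL) := by
        intro G
        haveI := cdf_isProb G
        have h1 : (∫ θ, ll θ ∂G.meas) = ∫ x, (ε * x + (C - ε*tL)) ∂G.meas := by
          refine MeasureTheory.integral_congr_ae (MeasureTheory.ae_of_all _ fun x => ?_)
          rw [hlldef]; simp only []; ring
        rw [h1, MeasureTheory.integral_add ((hidint G).const_mul ε)
          (MeasureTheory.integrable_const _), MeasureTheory.integral_const,
          MeasureTheory.integral_const_mul]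
        simp
      have hICε : IsIC F₀ c Qε 0 F := by
        refine ⟨hFsig, fun G hGsig => ?_⟩
        have hsplitG : ∀ (G' : CDF θL θH), (G'.integ fun θ => Vfun θL Qε 0 θ - c θ) =
            (G'.integ fun θ => Vfun θL Q 0 θ - c θ) - ∫ θ, hh θ ∂G'.meas := by
          intro G'
          unfold CDF.integ
          have h1 : (∫ θ, (Vfun θL Qε 0 θ - c θ) ∂G'.meas) =
              ∫ θ, ((Vfun θL Q 0 θ - c θ) - hh θ) ∂G'.meas := by
            refine MeasureTheory.integral_congr_ae ?_
            filter_upwards [cdf_ae_Icc G'] with x hx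
            rw [hVεeq x hx, hVfunQ x hx]
            ring
          rw [h1, MeasureTheory.integral_sub (hVcint G') (hhint G')]
        rw [hsplitG G, hsplitG F]
        have h2 := hFbest G hGsig
        have e1 : (∫ θ, hh θ ∂F.meas) = ∫ θ, ll θ ∂F.meas := by
          refine MeasureTheory.integral_congr_ae ?_
          filter_upwards [cdf_ae_Icc F, cdf_ae_Ici_thetaLF F] with x hx1 hx2
          exact hℓeq x ⟨hx2, hx1.2⟩
        have e2 : (∫ θ, ll θ ∂G.meas) ≤ ∫ θ, hh θ ∂G.meas := by
          refine MeasureTheory.integral_mono_ae (hllint G) (hhint G) ?_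
          filter_upwards [cdf_ae_Icc G] with x hx using hℓle x hx
        have e3 : (∫ θ, ll θ ∂F.meas) = ∫ θ, ll θ ∂G.meas := by
          rw [hllval F, hllval G, signal_mean_eq hθ hFsig hGsig]
        linarith
      have hQεalloc : IsAllocation θL θH qbar Qε := by
        constructor
        · intro a ha b hb hab
          exact max_le_max (by linarith [hQmono ha hb hab]) le_rfl
        · intro t ht
          exact ⟨le_max_right _ _, max_le (by linarith [(hQmem t ht).2]) hqbar.le⟩
      have hprof := hoptim Qε 0 F hQεalloc le_rfl hICε
      set gp1 : ℝ → ℝ := fun θ => clampθ θ * Qc θ - VQ θ - κc (Qc θ) with hgp1def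
      set gp2 : ℝ → ℝ := fun θ =>
        clampθ θ * (Qc θ - minQ θ) - (VQ θ - hh θ) - κc (Qc θ - minQ θ) with hgp2def
      have hgp1meas : Measurable gp1 :=
        ((hclampθ_cont.measurable.mul hQcmeas).sub hVQmeas).sub
          (hκc_cont.measurable.comp hQcmeas)
      have hgp2meas : Measurable gp2 :=
        ((hclampθ_cont.measurable.mul (hQcmeas.sub hminQmeas)).sub
          (hVQmeas.sub hhmeas)).sub (hκc_cont.measurable.comp (hQcmeas.sub hminQmeas))
      have hprodB : ∀ x ∈ Set.Icc θL θH, ∀ q : ℝ, q ∈ Set.Icc 0 qbar →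
          |clampθ x * q| ≤ (|θL| + |θH|) * qbar := by
        intro x hx q hq
        rw [hclampθ_id x hx, abs_mul]
        refine mul_le_mul (habsB x hx) ?_ (abs_nonneg _)
          ((abs_nonneg x).trans (habsB x hx))
        rw [abs_le]
        exact ⟨by linarith [hq.1], hq.2⟩
      have hgp1int : MeasureTheory.Integrable gp1 F.meas := by
        refine cdf_integrable_of F hgp1meas (fun _ _ => rfl)
          (M := (|θL| + |θH|) * qbar + qbar*(θH-θL) + ε*(θH-θL) + Mκ) (fun x hx => ?_)
        have h1 := hprodB x hx (Qc x) (hQcmem x)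
        have h2 := hVQbdd x hx
        have h3 := hκcb (Qc x)
        rw [Real.norm_eq_abs] at h3 ⊢
        rw [hgp1def]
        simp only []
        rw [abs_le]
        rw [abs_le] at h1 h3
        have hεpos : 0 ≤ ε*(θH-θL) := mul_nonneg hε0.le (by linarith)
        constructor <;> linarith [h1.1, h1.2, h2.1, h2.2, h3.1, h3.2]
      have hgp2int : MeasureTheory.Integrable gp2 F.meas := by
        refine cdf_integrable_of F hgp2meas (fun _ _ => rfl)
          (M := (|θL| + |θH|) * qbar + qbar*(θH-θL) + ε*(θH-θL) + Mκ) (fun x hx => ?_)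
        have hqmem : Qc x - minQ x ∈ Set.Icc 0 qbar :=
          ⟨by linarith [hminQleQc x], by linarith [(hQcmem x).2, hminQnn x]⟩
        have h1 := hprodB x hx (Qc x - minQ x) hqmem
        have h2 := hVQbdd x hx
        have h3 := hκcb (Qc x - minQ x)
        have h4 := hhbdd x hx
        rw [Real.norm_eq_abs] at h3 h4 ⊢
        rw [hgp2def]
        simp only []
        rw [abs_le]
        rw [abs_le] at h1 h3 h4
        constructor <;> linarith [h1.1, h1.2, h2.1, h2.2, h3.1, h3.2, h4.1, h4.2]
      have hprofeq1 : F.integ (profit θL κ Q 0) = ∫ θ, gp1 θ ∂F.meas := by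
        unfold CDF.integ
        refine MeasureTheory.integral_congr_ae ?_
        filter_upwards [cdf_ae_Icc F] with x hx
        have e1 : κc (Q x) = κ (Q x) := by
          rw [hκcdef]; simp only []; rw [hclampq_id _ (hQmem x hx)]
        show profit θL κ Q 0 x = clampθ x * Qc x - VQ x - κc (Qc x)
        unfold profit
        rw [hclampθ_id x hx, hQceq x hx, hVfunQ x hx, e1]
      have hprofeq2 : F.integ (profit θL κ Qε 0) = ∫ θ, gp2 θ ∂F.meas := by
        unfold CDF.integ
        refine MeasureTheory.integral_congr_ae ?_
        filter_upwards [cdf_ae_Icc F] with x hx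
        have e2 : κ (Qε x) = κc (Qε x) := by
          rw [hκcdef]; simp only []; rw [hclampq_id _ (hQεalloc.2 x hx)]
        show profit θL κ Qε 0 x =
          clampθ x * (Qc x - minQ x) - (VQ x - hh x) - κc (Qc x - minQ x)
        unfold profit
        rw [hclampθ_id x hx, ← hQεeq x hx, hVεeq x hx, e2]
      rw [hprofeq1, hprofeq2] at hprof
      set Dε : ℝ → ℝ := fun θ => κc (Qc θ) - κc (Qc θ - ε) with hDdef
      have hDmeas : Measurable Dε :=
        (hκc_cont.measurable.comp hQcmeas).sub
          (hκc_cont.measurable.comp (hQcmeas.sub_const ε))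
      have hDint : MeasureTheory.Integrable Dε F.meas := by
        refine cdf_integrable_of F hDmeas (fun _ _ => rfl) (M := Mκ + Mκ) (fun x _ => ?_)
        have h1 := hκcb (Qc x)
        have h2 := hκcb (Qc x - ε)
        rw [Real.norm_eq_abs] at h1 h2 ⊢
        rw [hDdef]
        simp only []
        rw [abs_le]
        rw [abs_le] at h1 h2
        constructor <;> linarith [h1.1, h1.2, h2.1, h2.2]
      have hdiff : ∫ θ, (gp1 θ - gp2 θ) ∂F.meas = (ε*tL - C) - ∫ θ, Dε θ ∂F.meas := by
        have h1 : ∫ θ, (gp1 θ - gp2 θ) ∂F.meas = ∫ θ, ((ε*tL - C) - Dε θ) ∂F.meas := by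
          refine MeasureTheory.integral_congr_ae ?_
          filter_upwards [cdf_ae_Icc F, cdf_ae_Ici_thetaLF F] with x hx1 hx2
          have hQx : q₀ ≤ Q x := hQmono htLmem hx1 hx2
          have hminx : minQ x = ε := by
            rw [hminQdef]; simp only []; rw [hQceq x hx1]
            exact min_eq_right (by linarith)
          have hllx : hh x = C + ε*(x - tL) := by
            rw [hℓeq x ⟨hx2, hx1.2⟩, hlldef]
          have hQceqx : Qc x = Q x := hQceq x hx1
          rw [hgp1def, hgp2def, hDdef]
          simp only []
          rw [hminx, hllx, hclampθ_id x hx1]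
          ring
        rw [h1, MeasureTheory.integral_sub (MeasureTheory.integrable_const _) hDint,
          MeasureTheory.integral_const]
        simp
      have hsub := MeasureTheory.integral_sub hgp1int hgp2int
      have hDle : (∫ θ, Dε θ ∂F.meas) ≤ ε*tL - C := by
        have h0 : 0 ≤ ∫ θ, (gp1 θ - gp2 θ) ∂F.meas := by
          rw [hsub]; linarith [hprof]
        linarith [hdiff, h0]
      have hKint : MeasureTheory.Integrable (fun θ => κ'c (Qc θ - ε)) F.meas :=
        cdf_integrable_of F (hκ'c_cont.measurable.comp (hQcmeas.sub_const ε))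
          (fun _ _ => rfl) (M := Mκ') (fun x _ => hκ'cb _)
      have hptwise : ∀ᵐ θ ∂F.meas, ε * κ'c (Qc θ - ε) ≤ Dε θ := by
        filter_upwards [cdf_ae_Icc F, cdf_ae_Ici_thetaLF F] with x hx1 hx2
        have hQx : q₀ ≤ Qc x := by
          rw [hQceq x hx1]; exact hQmono htLmem hx1 hx2
        have hymem : Qc x - ε ∈ Set.Icc 0 qbar := ⟨by linarith, by linarith [(hQcmem x).2]⟩
        have hxmem : Qc x ∈ Set.Icc 0 qbar := hQcmem x
        have hslope := kappa_deriv_le_slope hκ hymem hxmem (by linarith)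
        have e1 : κ'c (Qc x - ε) = κ' (Qc x - ε) := by
          rw [hκ'cdef]; simp only []; rw [hclampq_id _ hymem]
        have e2 : κc (Qc x) = κ (Qc x) := by
          rw [hκcdef]; simp only []; rw [hclampq_id _ hxmem]
        have e3 : κc (Qc x - ε) = κ (Qc x - ε) := by
          rw [hκcdef]; simp only []; rw [hclampq_id _ hymem]
        rw [hDdef]
        simp only []
        rw [e1, e2, e3]
        calc ε * κ' (Qc x - ε) = κ' (Qc x - ε) * (Qc x - (Qc x - ε)) := by ring
          _ ≤ κ (Qc x) - κ (Qc x - ε) := hslope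
      have hKle : ε * ∫ θ, κ'c (Qc θ - ε) ∂F.meas ≤ ε * (tL - δ₀) := by
        have h1 : (∫ θ, ε * κ'c (Qc θ - ε) ∂F.meas) ≤ ∫ θ, Dε θ ∂F.meas :=
          MeasureTheory.integral_mono_ae (hKint.const_mul ε) hDint hptwise
        rw [MeasureTheory.integral_const_mul] at h1
        nlinarith [hCge, hDle]
      exact le_of_mul_le_mul_left hKle hε0
    -- take ε → 0 along a sequence
    set εn : ℕ → ℝ := fun n => q₀/2 / (n+1) with hεndef
    have hεn_pos : ∀ n, 0 < εn n := fun n => by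
      rw [hεndef]; positivity
    have hεn_le : ∀ n, εn n ≤ q₀/2 := by
      intro n
      rw [hεndef]
      simp only []
      rw [div_le_iff₀ (by positivity)]
      nlinarith [Nat.cast_nonneg (α := ℝ) n]
    have hεn_lim : Filter.Tendsto εn Filter.atTop (nhds 0) := by
      have h1 := tendsto_one_div_add_atTop_nhds_zero_nat (𝕜 := ℝ)
      have h2 := h1.const_mul (q₀/2)
      rw [mul_zero] at h2
      refine h2.congr (fun n => ?_)
      rw [hεndef]
      simp only []
      ring
    have hmain : ∀ n, (∫ θ, κ'c (Qc θ - εn n) ∂F.meas) ≤ tL - δ₀ :=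
      fun n => main _ (hεn_pos n) (hεn_le n)
    have hKnint : ∀ n, MeasureTheory.Integrable (fun θ => κ'c (Qc θ - εn n)) F.meas :=
      fun n => cdf_integrable_of F (hκ'c_cont.measurable.comp (hQcmeas.sub_const _))
        (fun _ _ => rfl) (M := Mκ') (fun x _ => hκ'cb _)
    have hg1 : κ' q₀ ≤ tL - δ₀ := by
      have hlow : ∀ n, κ'c (q₀ - εn n) ≤ ∫ θ, κ'c (Qc θ - εn n) ∂F.meas := by
        intro n
        have hae : ∀ᵐ θ ∂F.meas, κ'c (q₀ - εn n) ≤ κ'c (Qc θ - εn n) := by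
          filter_upwards [cdf_ae_Icc F, cdf_ae_Ici_thetaLF F] with x hx1 hx2
          have hQx : q₀ ≤ Qc x := by
            rw [hQceq x hx1]; exact hQmono htLmem hx1 hx2
          have h1 : q₀ - εn n ∈ Set.Icc 0 qbar :=
            ⟨by linarith [hεn_le n], by linarith [hq₀mem.2, hεn_pos n]⟩
          have h2 : Qc x - εn n ∈ Set.Icc 0 qbar :=
            ⟨by linarith [hεn_le n], by linarith [(hQcmem x).2, hεn_pos n]⟩
          have e1 : κ'c (q₀ - εn n) = κ' (q₀ - εn n) := by
            rw [hκ'cdef]; simp only []; rw [hclampq_id _ h1]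
          have e2 : κ'c (Qc x - εn n) = κ' (Qc x - εn n) := by
            rw [hκ'cdef]; simp only []; rw [hclampq_id _ h2]
          rw [e1, e2]
          exact kappa_deriv_mono hκ h1 h2 (by linarith)
        calc κ'c (q₀ - εn n) = ∫ _θ, κ'c (q₀ - εn n) ∂F.meas := by
              rw [MeasureTheory.integral_const]; simp
          _ ≤ _ := MeasureTheory.integral_mono_ae
              (MeasureTheory.integrable_const _) (hKnint n) hae
      have hub : ∀ n, κ'c (q₀ - εn n) ≤ tL - δ₀ := fun n => (hlow n).trans (hmain n)
      have hq₀lim : Filter.Tendsto (fun n => q₀ - εn n) Filter.atTop (nhds q₀) := by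
        have h2 := hεn_lim.const_sub q₀
        rw [sub_zero] at h2
        exact h2
      have hcont : Filter.Tendsto (fun n => κ'c (q₀ - εn n)) Filter.atTop (nhds (κ'c q₀)) :=
        (hκ'c_cont.tendsto q₀).comp hq₀lim
      have hfin := le_of_tendsto hcont (Filter.Eventually.of_forall hub)
      have : κ'c q₀ = κ' q₀ := by
        rw [hκ'cdef]; simp only []; rw [hclampq_id _ hq₀mem]
      linarith [hfin, this.symm.le, this.le]
    refine ⟨lt_of_le_of_lt hg1 (by linarith), fun _ => ?_⟩
    have hres : F.meas.restrict (Set.Icc tL θH) = F.meas := by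
      refine MeasureTheory.Measure.restrict_eq_self_of_ae_mem ?_
      filter_upwards [cdf_ae_Icc F, cdf_ae_Ici_thetaLF F] with x h1 h2
      exact ⟨h2, h1.2⟩
    have heqint : (∫ θ in Set.Icc tL θH, κ' (Q θ) ∂F.meas) =
        ∫ θ, κ'c (Qc θ) ∂F.meas := by
      rw [hres]
      refine MeasureTheory.integral_congr_ae ?_
      filter_upwards [cdf_ae_Icc F] with x hx
      have e1 : κ'c (Qc x) = κ' (Q x) := by
        rw [hκ'cdef]; simp only []; rw [hQceq x hx, hclampq_id _ (hQmem x hx)]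
      exact e1.symm
    rw [heqint, cdf_leftLim_thetaLF F]
    have hDCT : Filter.Tendsto (fun n => ∫ θ, κ'c (Qc θ - εn n) ∂F.meas) Filter.atTop
        (nhds (∫ θ, κ'c (Qc θ) ∂F.meas)) := by
      refine MeasureTheory.tendsto_integral_of_dominated_convergence
        (bound := fun _ => Mκ') (fun n => ((hκ'c_cont.measurable.comp
          (hQcmeas.sub_const _)).aestronglyMeasurable)) (MeasureTheory.integrable_const _)
        (fun n => MeasureTheory.ae_of_all _ fun x => hκ'cb _) ?_
      refine MeasureTheory.ae_of_all _ fun x => ?_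
      have h1 : Filter.Tendsto (fun n => Qc x - εn n) Filter.atTop (nhds (Qc x)) := by
        have h2 := hεn_lim.const_sub (Qc x)
        rw [sub_zero] at h2
        exact h2
      exact (hκ'c_cont.tendsto _).comp h1
    have h2 := le_of_tendsto hDCT (Filter.Eventually.of_forall hmain)
    calc (∫ θ, κ'c (Qc θ) ∂F.meas) ≤ tL - δ₀ := h2
      _ ≤ (1 - 0) * tL := by linarith
end

section
/- Let F ∈ 𝓘 with supp F ⊂ (θL, θH) and let Q be an F-ICC allocation with F-shadow derivative p_Q. Suppose θ₁, θ₂ ∈ (θL_F, θH_F] with θ₁ < θ₂ and I_F(θ₁) = I_F(θ₂) = 0. Define p̃ : Θ → ℝ by p̃(θ) = p_Q(θ) for θ ≤ θ₁, p̃(θ) = p_Q(θ₁) for θ ∈ [θ₁, θ₂], and p̃(θ) = p_Q(θ) − (p_Q(θ₂) − p_Q(θ₁)) for θ ≥ θ₂. Then p̃ is an F-shadow derivative, and hence its induced allocation Q^{p̃} is an F-ICC allocation. -/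
open MeasureTheory Set Filter

theorem statement19 {θL θH : ℝ} (hθL : 0 ≤ θL) (hθ : θL < θH)
    (F₀ : CDF θL θH) (hF₀ : IsPrior F₀)
    (c c' c'' : ℝ → ℝ) (hc : CostAssumptions θL θH F₀.mean c c' c'')
    (qbar : ℝ) (hqbar : 0 < qbar)
    (F : CDF θL θH) (hF : IsSignal F₀ F) (hsupp : F.supp ⊆ Set.Ioo θL θH)
    (Q p : ℝ → ℝ) (hp : IsShadowDeriv qbar F₀ c' F p)
    (hQ : ∀ θ ∈ Set.Icc θL θH, Q θ = inducedAlloc qbar c' F p θ)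
    (θ₁ θ₂ : ℝ)
    (h1 : θ₁ ∈ Set.Ioc (thetaLF F) (thetaHF F))
    (h2 : θ₂ ∈ Set.Ioc (thetaLF F) (thetaHF F)) (h12 : θ₁ < θ₂)
    (hI1 : IFun F₀ F θ₁ = 0) (hI2 : IFun F₀ F θ₂ = 0) :
    IsShadowDeriv qbar F₀ c' F
      (fun θ => if θ ≤ θ₁ then p θ else if θ ≤ θ₂ then p θ₁
        else p θ - (p θ₂ - p θ₁)) ∧
    IsICC qbar F₀ c' F
      (inducedAlloc qbar c' F
        (fun θ => if θ ≤ θ₁ then p θ else if θ ≤ θ₂ then p θ₁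
          else p θ - (p θ₂ - p θ₁))) := by

  obtain ⟨⟨M, hM⟩, hmono, hflat, hlo, hhi⟩ := hp
  have hne : F.supp.Nonempty := by
    by_contra h
    rw [Set.not_nonempty_iff_eq_empty] at h
    have h1' := h1
    simp only [thetaLF, thetaHF, h, Real.sInf_empty, Real.sSup_empty, Set.mem_Ioc] at h1'
    linarith [h1'.1, h1'.2]
  have hLle : θL ≤ thetaLF F := le_csInf hne (fun x hx => (hsupp hx).1.le)
  have hHle : thetaHF F ≤ θH := csSup_le hne (fun x hx => (hsupp hx).2.le)
  have hLH : thetaLF F ≤ thetaHF F := le_trans h1.1.le h1.2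
  have hLF_mem : thetaLF F ∈ Set.Icc θL θH := ⟨hLle, hLH.trans hHle⟩
  have hHF_mem : thetaHF F ∈ Set.Icc θL θH := ⟨hLle.trans hLH, hHle⟩
  have hθ1 : θ₁ ∈ Set.Icc θL θH := ⟨le_trans hLle h1.1.le, le_trans h1.2 hHle⟩
  have hθ2 : θ₂ ∈ Set.Icc θL θH := ⟨le_trans hLle h2.1.le, le_trans h2.2 hHle⟩
  have hp12 : p θ₁ ≤ p θ₂ := hmono hθ1 hθ2 h12.le
  set pt : ℝ → ℝ := fun θ => if θ ≤ θ₁ then p θ else if θ ≤ θ₂ then p θ₁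
    else p θ - (p θ₂ - p θ₁) with hpt
  have hSD : IsShadowDeriv qbar F₀ c' F pt := by
    refine ⟨⟨3*M, ?_⟩, ?_, ?_, ?_, ?_⟩
    · intro θ hθm
      have b0 := hM θ hθm
      have b1 := hM θ₁ hθ1
      have b2 := hM θ₂ hθ2
      rw [abs_le] at b0 b1 b2 ⊢
      simp only [hpt]
      split_ifs <;> constructor <;> linarith [b0.1, b0.2, b1.1, b1.2, b2.1, b2.2]
    · intro x hx y hy hxy
      simp only [hpt]
      by_cases hx1 : x ≤ θ₁
      · by_cases hy1 : y ≤ θ₁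
        · simpa [hx1, hy1] using hmono hx hy hxy
        · by_cases hy2 : y ≤ θ₂
          · simpa [hx1, hy1, hy2] using hmono hx hθ1 hx1
          · simp only [hx1, hy1, hy2, if_true, if_false]
            have h2y : p θ₂ ≤ p y := hmono hθ2 hy (le_of_not_ge hy2)
            have hx1' := hmono hx hθ1 hx1
            linarith
      · have hy1 : ¬ y ≤ θ₁ := fun h => hx1 (hxy.trans h)
        by_cases hx2 : x ≤ θ₂
        · by_cases hy2 : y ≤ θ₂
          · simp [hx1, hx2, hy1, hy2]
          · simp only [hx1, hx2, hy1, hy2, if_true, if_false]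
            have h2y : p θ₂ ≤ p y := hmono hθ2 hy (le_of_not_ge hy2)
            linarith
        · have hy2 : ¬ y ≤ θ₂ := fun h => hx2 (hxy.trans h)
          simp only [hx1, hx2, hy1, hy2, if_false]
          have := hmono hx hy hxy
          linarith
    · intro a b hab x hx y hy
      have hθ1ni : θ₁ ∉ Set.Ioo a b := fun h => by
        have := (hab h).2; rw [hI1] at this; exact lt_irrefl 0 this
      have hθ2ni : θ₂ ∉ Set.Ioo a b := fun h => by
        have := (hab h).2; rw [hI2] at this; exact lt_irrefl 0 this
      have key1 : ∀ z ∈ Set.Ioo a b, ∀ w ∈ Set.Ioo a b, z ≤ θ₁ → w ≤ θ₁ := by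
        intro z hz w hw hz1
        by_contra hw'
        push_neg at hw'
        exact hθ1ni ⟨lt_of_lt_of_le hz.1 hz1, hw'.trans hw.2⟩
      have key2 : ∀ z ∈ Set.Ioo a b, ∀ w ∈ Set.Ioo a b, z ≤ θ₂ → w ≤ θ₂ := by
        intro z hz w hw hz2
        by_contra hw'
        push_neg at hw'
        exact hθ2ni ⟨lt_of_lt_of_le hz.1 hz2, hw'.trans hw.2⟩
      simp only [hpt]
      by_cases hx1 : x ≤ θ₁
      · have hy1 : y ≤ θ₁ := key1 x hx y hy hx1
        simp only [hx1, hy1, if_true]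
        exact hflat a b hab x hx y hy
      · have hy1 : ¬ y ≤ θ₁ := fun h => hx1 (key1 y hy x hx h)
        by_cases hx2 : x ≤ θ₂
        · have hy2 : y ≤ θ₂ := key2 x hx y hy hx2
          simp [hx1, hx2, hy1, hy2]
        · have hy2 : ¬ y ≤ θ₂ := fun h => hx2 (key2 y hy x hx h)
          simp only [hx1, hx2, hy1, hy2, if_false]
          rw [hflat a b hab x hx y hy]
    · have : pt (thetaLF F) = p (thetaLF F) := by simp [hpt, h1.1.le]
      rw [this]; exact hlo
    · have hn1 : ¬ thetaHF F ≤ θ₁ := not_le.mpr (lt_of_lt_of_le h12 h2.2)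
      by_cases hh2 : thetaHF F ≤ θ₂
      · have : pt (thetaHF F) = p θ₁ := by simp [hpt, hn1, hh2]
        rw [this]
        exact le_trans (hmono hθ1 hHF_mem (h12.le.trans h2.2)) hhi
      · have : pt (thetaHF F) = p (thetaHF F) - (p θ₂ - p θ₁) := by
          simp [hpt, hn1, hh2]
        rw [this]
        linarith
  exact ⟨hSD, pt, hSD, fun θ _ => rfl⟩
end
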